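/- arXiv:2305.01036 — 2 statements merged into one kernel-verified Lean document; each statement's English description precedes it below -/
import Mathlib

section
/- Suppose ρ is a regular, nonnegative solution of the Patlak–Keller–Segel–IPM system that forms a finite-time singularity at T_* < ∞. Then for every N ≥ N₀: there are only finitely many good intervals and finitely many bad intervals of level N in [0,T_*); the good and bad intervals of level N intertwine (between any two good intervals of level N there is a bad interval of level N, and between any two bad intervals of level N there is a good interval of level N); the first and the last interval of level N are good; and the number of good intervals of level N exceeds the number of bad intervals of level N by exactly one. -/
open MeasureTheory Real Set Filter

noncomputable section

/-- The fundamental domain `Ω = 𝕋 × [0,π]`, realized as `(-π,π] × [0,π] ⊆ ℝ²`. -/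
def Qdom : Set (ℝ × ℝ) := Ioc (-π) π ×ˢ Icc 0 π

/-- The closed strip `ℝ × [0,π]` on which the PDE is posed (functions are `2π`-periodic in
the first variable). -/
def Strip : Set (ℝ × ℝ) := univ ×ˢ Icc 0 π

/-- `2π`-periodicity in the first variable. -/
def Periodic2 (f : ℝ × ℝ → ℝ) : Prop := ∀ p : ℝ × ℝ, f (p.1 + 2 * π, p.2) = f p

/-- First partial derivative `∂_{x₁}`. -/
def pd1 (f : ℝ × ℝ → ℝ) (p : ℝ × ℝ) : ℝ := fderiv ℝ f p (1, 0)

/-- Second partial derivative `∂_{x₂}`. -/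
def pd2 (f : ℝ × ℝ → ℝ) (p : ℝ × ℝ) : ℝ := fderiv ℝ f p (0, 1)

/-- Laplacian. -/
def lap2 (f : ℝ × ℝ → ℝ) (p : ℝ × ℝ) : ℝ := pd1 (pd1 f) p + pd2 (pd2 f) p

/-- Mean over `Ω`: `f_M = (1/(2π²)) ∫_Ω f`. -/
def meanQ (f : ℝ × ℝ → ℝ) : ℝ := (1 / (2 * π ^ 2)) * ∫ p in Qdom, f p

/-- Squared `L²(Ω)` norm. -/
def nL2sq (f : ℝ × ℝ → ℝ) : ℝ := ∫ p in Qdom, (f p) ^ 2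

/-- `L²(Ω)` norm. -/
def nL2 (f : ℝ × ℝ → ℝ) : ℝ := Real.sqrt (nL2sq f)

/-- `L¹(Ω)` norm. -/
def nL1 (f : ℝ × ℝ → ℝ) : ℝ := ∫ p in Qdom, |f p|

/-- `L^∞(Ω)` norm (for continuous functions). -/
def nLinf (f : ℝ × ℝ → ℝ) : ℝ := sSup ((fun p => |f p|) '' Qdom)

/-- Squared `L²(Ω)` norm of the gradient. -/
def gradL2sq (f : ℝ × ℝ → ℝ) : ℝ := ∫ p in Qdom, ((pd1 f p) ^ 2 + (pd2 f p) ^ 2)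

/-- `L²(Ω)` norm of the gradient. -/
def gradL2 (f : ℝ × ℝ → ℝ) : ℝ := Real.sqrt (gradL2sq f)

/-- `x₁`-average: `f̄(x₂) = (1/(2π)) ∫_𝕋 f(y₁,x₂) dy₁`. -/
def barF (f : ℝ × ℝ → ℝ) : ℝ × ℝ → ℝ := fun p => (1 / (2 * π)) * ∫ y in Ioc (-π) π, f (y, p.2)

/-- The fluctuation `f̃ = f - f̄`. -/
def tildeF (f : ℝ × ℝ → ℝ) : ℝ × ℝ → ℝ := fun p => f p - barF f p

/-- Dirichlet eigenfunction coefficients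
`f̂_D(k₁,k₂) = (1/π) ∫_𝕋 ∫₀^π f e^{-i k₁ x₁} sin(k₂ x₂) dx₂ dx₁`. -/
def dCoeff (f : ℝ × ℝ → ℝ) (k1 : ℤ) (k2 : ℕ) : ℂ :=
  (π : ℂ)⁻¹ * ∫ p in Qdom,
    (f p : ℂ) * Complex.exp (-Complex.I * (k1 : ℂ) * (p.1 : ℂ)) *
      ((Real.sin ((k2 : ℝ) * p.2) : ℝ) : ℂ)

/-- Squared `Ḣ₀⁻¹(Ω)` norm: `Σ_{k₁∈ℤ, k₂≥1} (k₁²+k₂²)⁻¹ |f̂_D(k₁,k₂)|²`. -/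
def H0neg1sq (f : ℝ × ℝ → ℝ) : ℝ :=
  ∑' k : ℤ × ℕ, (((k.1 : ℝ) ^ 2 + ((k.2 : ℝ) + 1) ^ 2)⁻¹ *
    Complex.normSq (dCoeff f k.1 (k.2 + 1)))

/-- `c = (−Δ_N)⁻¹ f`: the mean-zero, periodic solution of `-Δc = f` on the strip with
Neumann boundary conditions. -/
def IsInvNeumann (c f : ℝ × ℝ → ℝ) : Prop :=
  ContDiff ℝ (⊤ : ℕ∞) c ∧ Periodic2 c ∧ (∀ p ∈ Strip, -(lap2 c p) = f p) ∧
    (∀ x1 : ℝ, pd2 c (x1, 0) = 0 ∧ pd2 c (x1, π) = 0) ∧ meanQ c = 0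

/-- `ψ = (−Δ_D)⁻¹ f`: the periodic solution of `-Δψ = f` on the strip with
Dirichlet boundary conditions. -/
def IsInvDirichlet (ψ f : ℝ × ℝ → ℝ) : Prop :=
  ContDiff ℝ (⊤ : ℕ∞) ψ ∧ Periodic2 ψ ∧ (∀ p ∈ Strip, -(lap2 ψ p) = f p) ∧
    (∀ x1 : ℝ, ψ (x1, 0) = 0 ∧ ψ (x1, π) = 0)

/-- `ρ`, together with the chemical potential `c = (−Δ_N)⁻¹(ρ-ρ_M)` and stream function
`ψ = (−Δ_D)⁻¹ ∂_{x₁} ρ` (so that `u = g ∇^⊥ ψ`), is a regular solution of the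
Patlak–Keller–Segel–IPM system with buoyancy parameter `g` on the time set `I`:
continuous on `Ω × I`, `C^∞` in space-time for positive times, periodic, satisfying the
equation classically with Neumann boundary conditions for `ρ`. -/
structure IsRegSol (g : ℝ) (I : Set ℝ) (ρ c ψ : ℝ → ℝ × ℝ → ℝ) : Prop where
  cont : ContinuousOn (fun q : ℝ × (ℝ × ℝ) => ρ q.1 q.2) (I ×ˢ Strip)
  smooth : ContDiffOn ℝ (⊤ : ℕ∞) (fun q : ℝ × (ℝ × ℝ) => ρ q.1 q.2)
    ((I ∩ Ioi 0) ×ˢ (univ : Set (ℝ × ℝ)))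
  smooth_space : ∀ t ∈ I ∩ Ioi (0 : ℝ), ContDiff ℝ (⊤ : ℕ∞) (ρ t)
  periodic : ∀ t ∈ I, Periodic2 (ρ t)
  chem : ∀ t ∈ I ∩ Ioi (0 : ℝ), IsInvNeumann (c t) (fun p => ρ t p - meanQ (ρ t))
  stream : ∀ t ∈ I ∩ Ioi (0 : ℝ), IsInvDirichlet (ψ t) (fun p => pd1 (ρ t) p)
  bc : ∀ t ∈ I ∩ Ioi (0 : ℝ), ∀ x1 : ℝ, pd2 (ρ t) (x1, 0) = 0 ∧ pd2 (ρ t) (x1, π) = 0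
  pde : ∀ t ∈ I ∩ Ioi (0 : ℝ), ∀ p ∈ Strip,
    deriv (fun s => ρ s p) t
      + (-(g * pd2 (ψ t) p)) * pd1 (ρ t) p + (g * pd1 (ψ t) p) * pd2 (ρ t) p
      - lap2 (ρ t) p
      + (pd1 (fun q => ρ t q * pd1 (c t) q) p + pd2 (fun q => ρ t q * pd2 (c t) q) p) = 0

/-- Nonnegativity of a solution on the time set `I`. -/
def NonnegSol (I : Set ℝ) (ρ : ℝ → ℝ × ℝ → ℝ) : Prop :=
  ∀ t ∈ I, ∀ p ∈ Strip, 0 ≤ ρ t p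

/-- The deviation from the mean: `ρ(·,t) - ρ_M`. -/
def devF (ρ : ℝ → ℝ × ℝ → ℝ) (t : ℝ) : ℝ × ℝ → ℝ := fun p => ρ t p - meanQ (ρ t)

/-- Potential energy `E(t) = ∫_Ω ρ(t,x)(π - x₂) dx`. -/
def potE (ρ : ℝ → ℝ × ℝ → ℝ) (t : ℝ) : ℝ := ∫ p in Qdom, ρ t p * (π - p.2)

/-- `(s,r)` is a good interval of level `N`. -/
def GoodInterval (ρ : ℝ → ℝ × ℝ → ℝ) (N : ℕ) (s r : ℝ) : Prop :=
  s < r ∧ nL2sq (devF ρ s) = 2 ^ N ∧ nL2sq (devF ρ r) = 2 ^ (N + 1) ∧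
    ∀ t ∈ Ioo s r, (2 : ℝ) ^ N / 2 < nL2sq (devF ρ t) ∧ nL2sq (devF ρ t) < 2 ^ (N + 1)

/-- `(s,r)` is a bad interval of level `N`. -/
def BadInterval (ρ : ℝ → ℝ × ℝ → ℝ) (N : ℕ) (s r : ℝ) : Prop :=
  s < r ∧ nL2sq (devF ρ s) = 2 ^ (N + 1) ∧ nL2sq (devF ρ r) = 2 ^ N ∧
    ∀ t ∈ Ioo s r, (2 : ℝ) ^ N < nL2sq (devF ρ t) ∧ nL2sq (devF ρ t) < 2 ^ (N + 2)

/-- Indices `k` such that `(t_k, t_{k+1})` is a good interval of level `N`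
(in terms of the level function `lev`). -/
def GoodIdx (lev : ℕ → ℕ) (N : ℕ) : Set ℕ := {k | 1 ≤ k ∧ lev k = N ∧ lev (k + 1) = N + 1}

/-- Indices `k` such that `(t_k, t_{k+1})` is a bad interval of level `N`. -/
def BadIdx (lev : ℕ → ℕ) (N : ℕ) : Set ℕ := {k | 1 ≤ k ∧ lev k = N + 1 ∧ lev (k + 1) = N}


/-! ### Auxiliary lemmas -/

lemma aux_crossing_up (lev : ℕ → ℕ)
    (hstep : ∀ k, 1 ≤ k → lev (k + 1) = lev k - 1 ∨ lev (k + 1) = lev k + 1) (N : ℕ) :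
    ∀ b a, 1 ≤ a → a ≤ b → lev a ≤ N → N + 1 ≤ lev b →
    ∃ j, a ≤ j ∧ j < b ∧ lev j = N ∧ lev (j + 1) = N + 1 := by
  intro b
  induction b with
  | zero => intro a h1 hab ha hb; omega
  | succ b ih =>
    intro a h1 hab ha hb
    by_cases hab' : a ≤ b
    · by_cases hlb : N + 1 ≤ lev b
      · obtain ⟨j, hj1, hj2, hj3⟩ := ih a h1 hab' ha hlb
        exact ⟨j, hj1, by omega, hj3⟩
      · have h1b : 1 ≤ b := by omega
        rcases hstep b h1b with h | h
        · omega
        · exact ⟨b, hab', by omega, by omega, by omega⟩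
    · have : a = b + 1 := by omega
      subst this; omega

lemma aux_crossing_down (lev : ℕ → ℕ)
    (hstep : ∀ k, 1 ≤ k → lev (k + 1) = lev k - 1 ∨ lev (k + 1) = lev k + 1) (N : ℕ) :
    ∀ b a, 1 ≤ a → a ≤ b → N + 1 ≤ lev a → lev b ≤ N →
    ∃ j, a ≤ j ∧ j < b ∧ lev j = N + 1 ∧ lev (j + 1) = N := by
  intro b
  induction b with
  | zero => intro a h1 hab ha hb; omega
  | succ b ih =>
    intro a h1 hab ha hb
    by_cases hab' : a ≤ b
    · by_cases hlb : lev b ≤ N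
      · obtain ⟨j, hj1, hj2, hj3⟩ := ih a h1 hab' ha hlb
        exact ⟨j, hj1, by omega, hj3⟩
      · have h1b : 1 ≤ b := by omega
        rcases hstep b h1b with h | h
        · exact ⟨b, hab', by omega, by omega, by omega⟩
        · omega
    · have : a = b + 1 := by omega
      subst this; omega

lemma aux_comb_main (lev : ℕ → ℕ) (N : ℕ)
    (hstep : ∀ k, 1 ≤ k → lev (k + 1) = lev k - 1 ∨ lev (k + 1) = lev k + 1)
    (hBig : ∀ M : ℕ, ∃ K, ∀ k, K ≤ k → M < lev (k + 1))
    (hN1 : lev 1 ≤ N) :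
    (GoodIdx lev N).Finite ∧ (BadIdx lev N).Finite ∧
      (∀ k₁ ∈ GoodIdx lev N, ∀ k₂ ∈ GoodIdx lev N, k₁ < k₂ →
        ∃ j ∈ BadIdx lev N, k₁ < j ∧ j < k₂) ∧
      (∀ k₁ ∈ BadIdx lev N, ∀ k₂ ∈ BadIdx lev N, k₁ < k₂ →
        ∃ j ∈ GoodIdx lev N, k₁ < j ∧ j < k₂) ∧
      (∃ k ∈ GoodIdx lev N, ∀ j ∈ GoodIdx lev N ∪ BadIdx lev N, k ≤ j) ∧
      (∃ k ∈ GoodIdx lev N, ∀ j ∈ GoodIdx lev N ∪ BadIdx lev N, j ≤ k) ∧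
      (GoodIdx lev N).ncard = (BadIdx lev N).ncard + 1 := by
  classical
  have hGmem : ∀ k, k ∈ GoodIdx lev N ↔ (1 ≤ k ∧ lev k = N ∧ lev (k + 1) = N + 1) :=
    fun k => Iff.rfl
  have hBmem : ∀ k, k ∈ BadIdx lev N ↔ (1 ≤ k ∧ lev k = N + 1 ∧ lev (k + 1) = N) :=
    fun k => Iff.rfl
  obtain ⟨K₁, hK₁⟩ := hBig (N + 1)
  have hGoodFin : (GoodIdx lev N).Finite := by
    apply (Set.finite_Iio (K₁ + 1)).subset
    intro k hk
    rw [hGmem] at hk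
    rw [Set.mem_Iio]
    by_contra h
    have := hK₁ k (by omega)
    omega
  obtain ⟨K₀, hK₀⟩ := hBig N
  have hBadFin : (BadIdx lev N).Finite := by
    apply (Set.finite_Iio (K₀ + 1)).subset
    intro k hk
    rw [hBmem] at hk
    rw [Set.mem_Iio]
    by_contra h
    have := hK₀ k (by omega)
    omega
  have hGoodNe : (GoodIdx lev N).Nonempty := by
    have hb : N + 1 ≤ lev (K₀ + 1) := hK₀ K₀ le_rfl
    obtain ⟨j, hj1, _, hj3, hj4⟩ :=
      aux_crossing_up lev hstep N (K₀ + 1) 1 le_rfl (by omega) hN1 hb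
    exact ⟨j, (hGmem j).2 ⟨hj1, hj3, hj4⟩⟩
  have hGG : ∀ k₁ ∈ GoodIdx lev N, ∀ k₂ ∈ GoodIdx lev N, k₁ < k₂ →
      ∃ j ∈ BadIdx lev N, k₁ < j ∧ j < k₂ := by
    intro k₁ hk₁ k₂ hk₂ hlt
    rw [hGmem] at hk₁ hk₂
    obtain ⟨j, hj1, hj2, hj3, hj4⟩ := aux_crossing_down lev hstep N k₂ (k₁ + 1)
      (by omega) (by omega) (by omega) (by omega)
    exact ⟨j, (hBmem j).2 ⟨by omega, hj3, hj4⟩, by omega, hj2⟩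
  have hBB : ∀ k₁ ∈ BadIdx lev N, ∀ k₂ ∈ BadIdx lev N, k₁ < k₂ →
      ∃ j ∈ GoodIdx lev N, k₁ < j ∧ j < k₂ := by
    intro k₁ hk₁ k₂ hk₂ hlt
    rw [hBmem] at hk₁ hk₂
    obtain ⟨j, hj1, hj2, hj3, hj4⟩ := aux_crossing_up lev hstep N k₂ (k₁ + 1)
      (by omega) (by omega) (by omega) (by omega)
    exact ⟨j, (hGmem j).2 ⟨by omega, hj3, hj4⟩, by omega, hj2⟩
  have hUFin : (GoodIdx lev N ∪ BadIdx lev N).Finite := hGoodFin.union hBadFin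
  have hUNe : (GoodIdx lev N ∪ BadIdx lev N).Nonempty := hGoodNe.mono subset_union_left
  obtain ⟨m, hmU, hmmin⟩ := Set.exists_min_image _ id hUFin hUNe
  obtain ⟨M, hMU, hMmax⟩ := Set.exists_max_image _ id hUFin hUNe
  have hmGood : m ∈ GoodIdx lev N := by
    rcases hmU with h | h
    · exact h
    · exfalso
      rw [hBmem] at h
      obtain ⟨j, hj1, hj2, hj3, hj4⟩ := aux_crossing_up lev hstep N m 1 le_rfl (by omega)
        hN1 (by omega)
      have : m ≤ j := hmmin j (Or.inl ((hGmem j).2 ⟨by omega, hj3, hj4⟩))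
      omega
  have hMGood : M ∈ GoodIdx lev N := by
    rcases hMU with h | h
    · exact h
    · exfalso
      rw [hBmem] at h
      set b := max K₀ M with hb
      have hlevb : N + 1 ≤ lev (b + 1) := hK₀ b (le_max_left _ _)
      obtain ⟨j, hj1, hj2, hj3, hj4⟩ := aux_crossing_up lev hstep N (b + 1) (M + 1)
        (by omega) (by omega) (by omega) hlevb
      have : j ≤ M := hMmax j (Or.inl ((hGmem j).2 ⟨by omega, hj3, hj4⟩))
      omega
  have hGB : ∀ k, k ∈ GoodIdx lev N → k ∈ BadIdx lev N → False := by
    intro k hg hb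
    rw [hGmem] at hg; rw [hBmem] at hb; omega
  set f : ℕ → ℕ := fun j => sInf {g | g ∈ GoodIdx lev N ∧ j < g} with hf
  have hfne : ∀ j ∈ BadIdx lev N, ({g | g ∈ GoodIdx lev N ∧ j < g}).Nonempty := by
    intro j hj
    refine ⟨M, hMGood, ?_⟩
    have hjM : j ≤ M := hMmax j (Or.inr hj)
    have : j ≠ M := fun h => hGB M hMGood (h ▸ hj)
    omega
  have hfmem : ∀ j ∈ BadIdx lev N, f j ∈ GoodIdx lev N ∧ j < f j :=
    fun j hj => Nat.sInf_mem (hfne j hj)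
  have hfmono : ∀ j₁ ∈ BadIdx lev N, ∀ j₂ ∈ BadIdx lev N, j₁ < j₂ → f j₁ < f j₂ := by
    intro j₁ hj₁ j₂ hj₂ hlt
    obtain ⟨j', hj'G, hj'1, hj'2⟩ := hBB j₁ hj₁ j₂ hj₂ hlt
    have h1 : f j₁ ≤ j' := Nat.sInf_le ⟨hj'G, hj'1⟩
    have h2 : j₂ < f j₂ := (hfmem j₂ hj₂).2
    omega
  have hcard1 : (BadIdx lev N).ncard ≤ ((GoodIdx lev N) \ {m}).ncard := by
    refine Set.ncard_le_ncard_of_injOn f ?_ ?_ hGoodFin.diff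
    · intro j hj
      refine ⟨(hfmem j hj).1, ?_⟩
      simp only [Set.mem_singleton_iff]
      have : m ≤ j := hmmin j (Or.inr hj)
      have := (hfmem j hj).2
      omega
    · intro a ha b hb hab
      rcases lt_trichotomy a b with h | h | h
      · exact absurd hab (ne_of_lt (hfmono a ha b hb h))
      · exact h
      · exact absurd hab.symm (ne_of_lt (hfmono b hb a ha h))
  set f' : ℕ → ℕ := fun j => sInf {g | g ∈ BadIdx lev N ∧ j < g} with hf'
  have hf'ne : ∀ j ∈ (GoodIdx lev N) \ {M}, ({g | g ∈ BadIdx lev N ∧ j < g}).Nonempty := by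
    intro j hj
    have hjM : j < M := by
      have h1 : j ≤ M := hMmax j (Or.inl hj.1)
      have h2 : j ≠ M := by simpa using hj.2
      omega
    obtain ⟨j', hj'B, hj'1, hj'2⟩ := hGG j hj.1 M hMGood hjM
    exact ⟨j', hj'B, hj'1⟩
  have hf'mem : ∀ j ∈ (GoodIdx lev N) \ {M}, f' j ∈ BadIdx lev N ∧ j < f' j :=
    fun j hj => Nat.sInf_mem (hf'ne j hj)
  have hf'mono : ∀ j₁ ∈ (GoodIdx lev N) \ {M}, ∀ j₂ ∈ (GoodIdx lev N) \ {M},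
      j₁ < j₂ → f' j₁ < f' j₂ := by
    intro j₁ hj₁ j₂ hj₂ hlt
    obtain ⟨j', hj'B, hj'1, hj'2⟩ := hGG j₁ hj₁.1 j₂ hj₂.1 hlt
    have h1 : f' j₁ ≤ j' := Nat.sInf_le ⟨hj'B, hj'1⟩
    have h2 : j₂ < f' j₂ := (hf'mem j₂ hj₂).2
    omega
  have hcard2 : ((GoodIdx lev N) \ {M}).ncard ≤ (BadIdx lev N).ncard := by
    refine Set.ncard_le_ncard_of_injOn f' ?_ ?_ hBadFin
    · exact fun j hj => (hf'mem j hj).1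
    · intro a ha b hb hab
      rcases lt_trichotomy a b with h | h | h
      · exact absurd hab (ne_of_lt (hf'mono a ha b hb h))
      · exact h
      · exact absurd hab.symm (ne_of_lt (hf'mono b hb a ha h))
  have e1 : ((GoodIdx lev N) \ {m}).ncard + 1 = (GoodIdx lev N).ncard :=
    Set.ncard_diff_singleton_add_one hmGood hGoodFin
  have e2 : ((GoodIdx lev N) \ {M}).ncard + 1 = (GoodIdx lev N).ncard :=
    Set.ncard_diff_singleton_add_one hMGood hGoodFin
  refine ⟨hGoodFin, hBadFin, hGG, hBB, ⟨m, hmGood, hmmin⟩, ⟨M, hMGood, hMmax⟩, by omega⟩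

lemma aux_qdom_meas : MeasurableSet Qdom := measurableSet_Ioc.prod measurableSet_Icc

lemma aux_qdom_vol : volume Qdom < ⊤ :=
  lt_of_le_of_lt
    (measure_mono (by rw [Qdom]; exact Set.prod_mono Set.Ioc_subset_Icc_self le_rfl))
    ((isCompact_Icc.prod isCompact_Icc).measure_lt_top)

lemma aux_contOn_nL2sq (T : ℝ) (ρ : ℝ → ℝ × ℝ → ℝ)
    (hcont : ContinuousOn (fun q : ℝ × (ℝ × ℝ) => ρ q.1 q.2) ((Ico 0 T) ×ˢ Strip)) :
    ContinuousOn (fun t => nL2sq (devF ρ t)) (Ico 0 T) := by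
  have hQS : Qdom ⊆ Strip := by
    intro p hp
    rw [Qdom, Set.mem_prod] at hp
    rw [Strip, Set.mem_prod]
    exact ⟨Set.mem_univ _, hp.2⟩
  have hspace : ∀ t ∈ Ico (0:ℝ) T, ContinuousOn (ρ t) Qdom := by
    intro t ht
    have : ContinuousOn ((fun q : ℝ × (ℝ × ℝ) => ρ q.1 q.2) ∘ fun p : ℝ × ℝ => (t, p)) Qdom :=
      hcont.comp (Continuous.continuousOn (by fun_prop)) (fun p hp => Set.mk_mem_prod ht (hQS hp))
    exact this
  have htime : ∀ t₀ ∈ Ico (0:ℝ) T, ∀ p ∈ Qdom,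
      ContinuousWithinAt (fun t => ρ t p) (Ico 0 T) t₀ := by
    intro t₀ ht₀ p hp
    have hmap : Set.MapsTo (fun t : ℝ => (t, p)) (Ico 0 T) ((Ico 0 T) ×ˢ Strip) :=
      fun t ht => Set.mk_mem_prod ht (hQS hp)
    have : ContinuousWithinAt ((fun q : ℝ × (ℝ × ℝ) => ρ q.1 q.2) ∘ fun t : ℝ => (t, p))
        (Ico 0 T) t₀ :=
      ContinuousWithinAt.comp (hcont (t₀, p) (Set.mk_mem_prod ht₀ (hQS hp)))
        (Continuous.continuousWithinAt (by fun_prop)) hmap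
    exact this
  intro t₀ ht₀
  set b : ℝ := (t₀ + T) / 2 with hbdef
  have ht₀T : t₀ < T := ht₀.2
  have hb1 : t₀ < b := by rw [hbdef]; linarith
  have hb2 : b < T := by rw [hbdef]; linarith
  have hKsub : (Icc (0:ℝ) b ×ˢ (Icc (-π) π ×ˢ Icc (0:ℝ) π)) ⊆ (Ico 0 T) ×ˢ Strip := by
    intro q hq
    rw [Set.mem_prod] at hq ⊢
    refine ⟨⟨hq.1.1, lt_of_le_of_lt hq.1.2 hb2⟩, ?_⟩
    rw [Strip, Set.mem_prod]
    exact ⟨Set.mem_univ _, (Set.mem_prod.1 hq.2).2⟩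
  obtain ⟨C, hC⟩ :=
    (isCompact_Icc.prod (isCompact_Icc.prod isCompact_Icc)).exists_bound_of_continuousOn
      (hcont.mono hKsub)
  have hQD : Qdom ⊆ Icc (-π) π ×ˢ Icc (0:ℝ) π := by
    intro p hp
    rw [Qdom, Set.mem_prod] at hp
    exact ⟨Set.Ioc_subset_Icc_self hp.1, hp.2⟩
  have hbound : ∀ t ∈ Icc (0:ℝ) b ∩ Ico 0 T, ∀ p ∈ Qdom, |ρ t p| ≤ C := by
    intro t ht p hp
    have := hC (t, p) ⟨ht.1, hQD hp⟩
    simpa [Real.norm_eq_abs] using this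
  have hevK : ∀ᶠ t in nhdsWithin t₀ (Ico 0 T), t ∈ Icc (0:ℝ) b ∩ Ico 0 T := by
    have h1 : ∀ᶠ t in nhdsWithin t₀ (Ico 0 T), t ∈ Iio b :=
      eventually_nhdsWithin_of_eventually_nhds (Iio_mem_nhds hb1)
    have h2 : ∀ᶠ t in nhdsWithin t₀ (Ico 0 T), t ∈ Ico (0:ℝ) T := self_mem_nhdsWithin
    filter_upwards [h1, h2] with t htb htT
    exact ⟨⟨htT.1, le_of_lt htb⟩, htT⟩
  have hmean : ContinuousWithinAt (fun t => meanQ (ρ t)) (Ico 0 T) t₀ := by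
    have hint : ContinuousWithinAt (fun t => ∫ p in Qdom, ρ t p) (Ico 0 T) t₀ := by
      apply MeasureTheory.continuousWithinAt_of_dominated (bound := fun _ => C)
      · filter_upwards [self_mem_nhdsWithin] with t ht
        exact (hspace t ht).aestronglyMeasurable aux_qdom_meas
      · filter_upwards [hevK] with t ht
        exact MeasureTheory.ae_restrict_of_forall_mem aux_qdom_meas
          (fun p hp => by simpa [Real.norm_eq_abs] using hbound t ht p hp)
      · exact MeasureTheory.integrableOn_const aux_qdom_vol.ne
      · exact MeasureTheory.ae_restrict_of_forall_mem aux_qdom_meas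
          (fun p hp => htime t₀ ht₀ p hp)
    have heq : (fun t => meanQ (ρ t)) = fun t => (1 / (2 * π ^ 2)) * ∫ p in Qdom, ρ t p := rfl
    rw [heq]
    exact hint.const_mul _
  have hmb : ∀ᶠ t in nhdsWithin t₀ (Ico 0 T), |meanQ (ρ t)| ≤ |meanQ (ρ t₀)| + 1 := by
    have h := Metric.tendsto_nhds.1 hmean 1 one_pos
    filter_upwards [h] with t ht
    rw [Real.dist_eq] at ht
    have h2 := abs_sub_abs_le_abs_sub (meanQ (ρ t)) (meanQ (ρ t₀))
    linarith
  have hfinal : ContinuousWithinAt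
      (fun t => ∫ p in Qdom, (ρ t p - meanQ (ρ t)) ^ 2) (Ico 0 T) t₀ := by
    apply MeasureTheory.continuousWithinAt_of_dominated
      (bound := fun _ => (C + (|meanQ (ρ t₀)| + 1)) ^ 2)
    · filter_upwards [self_mem_nhdsWithin] with t ht
      exact (((hspace t ht).sub continuousOn_const).pow 2).aestronglyMeasurable aux_qdom_meas
    · filter_upwards [hevK, hmb] with t ht hmt
      refine MeasureTheory.ae_restrict_of_forall_mem aux_qdom_meas (fun p hp => ?_)
      have hb1' := hbound t ht p hp
      have h1 : |ρ t p - meanQ (ρ t)| ≤ C + (|meanQ (ρ t₀)| + 1) := by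
        have h3 := abs_le.1 hb1'
        have h4 := abs_le.1 hmt
        exact abs_le.2 ⟨by linarith, by linarith⟩
      rw [Real.norm_eq_abs, abs_of_nonneg (sq_nonneg _)]
      calc (ρ t p - meanQ (ρ t)) ^ 2 = |ρ t p - meanQ (ρ t)| ^ 2 := (sq_abs _).symm
        _ ≤ (C + (|meanQ (ρ t₀)| + 1)) ^ 2 := by
            exact pow_le_pow_left₀ (abs_nonneg _) h1 2
    · exact MeasureTheory.integrableOn_const aux_qdom_vol.ne
    · refine MeasureTheory.ae_restrict_of_forall_mem aux_qdom_meas (fun p hp => ?_)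
      exact ((htime t₀ ht₀ p hp).sub hmean).pow 2
  simpa only [nL2sq, devF] using hfinal

/-- Structure of good/bad intervals of a given level `N ≥ N₀` for a solution
blowing up at time `T`: given the switching times `t_k` (with level function `lev`), there are
only finitely many good and bad intervals of level `N`; they intertwine; the first and last
intervals of level `N` are good; and the number of good intervals of level `N` exceeds the
number of bad ones by exactly one. -/
theorem good_bad_interval_structure (g T : ℝ) (ρ c ψ : ℝ → ℝ × ℝ → ℝ) (hT : 0 < T)
    (hsol : IsRegSol g (Ico 0 T) ρ c ψ) (hpos : NonnegSol (Ico 0 T) ρ)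
    (hblow : Tendsto (fun t => nL2 (devF ρ t)) (nhdsWithin T (Iio T)) atTop)
    (N₀ : ℕ) (hN₀ : 1 ≤ N₀) (hinit : nL2sq (devF ρ 0) < (2 : ℝ) ^ (N₀ - 1))
    (tk : ℕ → ℝ) (lev : ℕ → ℕ)
    (ht1 : tk 1 = sSup {t ∈ Ico (0 : ℝ) T | nL2sq (devF ρ t) = 2 ^ N₀})
    (ht1mem : 0 ≤ tk 1)
    (hlev1 : lev 1 = N₀)
    (hlevge : ∀ k, 1 ≤ k → N₀ ≤ lev k)
    (hval : ∀ k, 1 ≤ k → nL2sq (devF ρ (tk k)) = 2 ^ lev k)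
    (hmono : ∀ k, 1 ≤ k → tk k < tk (k + 1) ∧ tk (k + 1) < T)
    (hstep : ∀ k, 1 ≤ k → lev (k + 1) = lev k - 1 ∨ lev (k + 1) = lev k + 1)
    (hmin : ∀ k, 1 ≤ k → ∀ t ∈ Ioo (tk k) (tk (k + 1)),
      nL2sq (devF ρ t) ≠ 2 ^ (lev k - 1) ∧ nL2sq (devF ρ t) ≠ 2 ^ (lev k + 1)) :
    ∀ N : ℕ, N₀ ≤ N →
      (GoodIdx lev N).Finite ∧ (BadIdx lev N).Finite ∧
      (∀ k₁ ∈ GoodIdx lev N, ∀ k₂ ∈ GoodIdx lev N, k₁ < k₂ →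
        ∃ j ∈ BadIdx lev N, k₁ < j ∧ j < k₂) ∧
      (∀ k₁ ∈ BadIdx lev N, ∀ k₂ ∈ BadIdx lev N, k₁ < k₂ →
        ∃ j ∈ GoodIdx lev N, k₁ < j ∧ j < k₂) ∧
      (∃ k ∈ GoodIdx lev N, ∀ j ∈ GoodIdx lev N ∪ BadIdx lev N, k ≤ j) ∧
      (∃ k ∈ GoodIdx lev N, ∀ j ∈ GoodIdx lev N ∪ BadIdx lev N, j ≤ k) ∧
      (GoodIdx lev N).ncard = (BadIdx lev N).ncard + 1 := by
  have hF : ContinuousOn (fun t => nL2sq (devF ρ t)) (Ico 0 T) := aux_contOn_nL2sq T ρ hsol.cont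
  set s : ℕ → ℝ := fun k => tk (k + 1) with hs
  have hsmono : StrictMono s := strictMono_nat_of_lt_succ (fun k => (hmono (k + 1) (by omega)).1)
  have hsT : ∀ k, s k < T := by
    intro k
    cases k with
    | zero => exact lt_trans (hmono 1 le_rfl).1 (hmono 1 le_rfl).2
    | succ k => exact (hmono (k + 1) (by omega)).2
  have hs0 : ∀ k, 0 ≤ s k := fun k => le_trans ht1mem (hsmono.monotone (Nat.zero_le k))
  have hbdd : BddAbove (Set.range s) := ⟨T, by rintro x ⟨k, rfl⟩; exact (hsT k).le⟩
  have htendsto : Tendsto s atTop (nhds (⨆ k, s k)) := tendsto_atTop_ciSup hsmono.monotone hbdd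
  set L := ⨆ k, s k with hLdef
  have hLle : L ≤ T := ciSup_le fun k => (hsT k).le
  have hFs : ∀ k, nL2sq (devF ρ (s k)) = 2 ^ lev (k + 1) := fun k => hval (k + 1) (by omega)
  have hBig : ∀ M : ℕ, ∃ K, ∀ k, K ≤ k → M < lev (k + 1) := by
    intro M
    rcases eq_or_lt_of_le hLle with hEq | hlt
    · have hsw : Tendsto s atTop (nhdsWithin T (Iio T)) :=
        tendsto_nhdsWithin_of_tendsto_nhds_of_eventually_within s (hEq ▸ htendsto)
          (Eventually.of_forall fun k => hsT k)
      have hcomp : Tendsto (fun k => nL2 (devF ρ (s k))) atTop atTop := hblow.comp hsw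
      have hev := hcomp.eventually_gt_atTop ((2 : ℝ) ^ M)
      obtain ⟨K, hK⟩ := Filter.eventually_atTop.1 hev
      refine ⟨K, fun k hk => ?_⟩
      have h1 : (2 : ℝ) ^ M < Real.sqrt ((2 : ℝ) ^ lev (k + 1)) := by
        have := hK k hk
        rwa [nL2, hFs k] at this
      have h2 : ((2 : ℝ) ^ M) ^ 2 < (2 : ℝ) ^ lev (k + 1) :=
        (Real.lt_sqrt (by positivity)).1 h1
      have h3 : (2 : ℝ) ^ M ≤ ((2 : ℝ) ^ M) ^ 2 := by
        rw [← pow_mul]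
        exact pow_le_pow_right₀ one_le_two (by omega)
      exact (pow_lt_pow_iff_right₀ one_lt_two).1 (lt_of_le_of_lt h3 h2)
    · exfalso
      have hLmem : L ∈ Ico (0 : ℝ) T := ⟨le_trans (hs0 0) (le_ciSup hbdd 0), hlt⟩
      have hsw : Tendsto s atTop (nhdsWithin L (Ico 0 T)) :=
        tendsto_nhdsWithin_of_tendsto_nhds_of_eventually_within s htendsto
          (Eventually.of_forall fun k => ⟨hs0 k, hsT k⟩)
      have hFc : Tendsto (fun k => nL2sq (devF ρ (s k))) atTop (nhds (nL2sq (devF ρ L))) := by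
        have h := Filter.Tendsto.comp (hF L hLmem).tendsto hsw
        exact h
      have hdiff : Tendsto (fun k => nL2sq (devF ρ (s (k + 1))) - nL2sq (devF ρ (s k)))
          atTop (nhds 0) := by
        have h1 : Tendsto (fun k => nL2sq (devF ρ (s (k + 1)))) atTop
            (nhds (nL2sq (devF ρ L))) := hFc.comp (tendsto_add_atTop_nat 1)
        simpa using h1.sub hFc
      obtain ⟨k, hk⟩ := (Metric.tendsto_nhds.1 hdiff 1 one_pos).exists
      rw [Real.dist_eq, sub_zero, hFs (k + 1), hFs k] at hk
      have hl1 : 1 ≤ lev (k + 1) := le_trans hN₀ (hlevge (k + 1) (by omega))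
      have hone : (1 : ℝ) ≤ (2 : ℝ) ^ (lev (k + 1) - 1) := one_le_pow₀ one_le_two
      have heq2 : (2 : ℝ) ^ lev (k + 1) = 2 ^ (lev (k + 1) - 1) * 2 := by
        rw [← pow_succ]
        congr 1
        omega
      rcases hstep (k + 1) (by omega) with h | h
      · rw [h, heq2] at hk
        rw [show (2 : ℝ) ^ (lev (k + 1) - 1) - 2 ^ (lev (k + 1) - 1) * 2
              = -(2 ^ (lev (k + 1) - 1)) by ring,
          abs_neg, abs_of_nonneg (by positivity)] at hk
        linarith
      · rw [h, pow_succ] at hk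
        rw [show (2 : ℝ) ^ lev (k + 1) * 2 - 2 ^ lev (k + 1) = 2 ^ lev (k + 1) by ring,
          abs_of_nonneg (by positivity)] at hk
        have : (1 : ℝ) ≤ (2 : ℝ) ^ lev (k + 1) := one_le_pow₀ one_le_two
        linarith
  intro N hN
  exact aux_comb_main lev N hstep hBig (by rw [hlev1]; exact hN)
end
end

section
/- Let ρ be a regular, nonnegative solution of the Patlak–Keller–Segel–IPM system on [0,T_*). There exist a natural number N₀ depending only on ρ_M and a universal constant C > 0 such that for all N ≥ N₀ the following holds: if 0 ≤ s < r < T_* and 2^{N−1} ≤ ‖ρ(·,t) − ρ_M‖²_{L²} ≤ 2^{N+2} for all t ∈ (s,r), then |∫_s^r ∫_Ω ρ ∂_{x₂} (−Δ_N)⁻¹(ρ − ρ_M) dx dt| ≤ C ρ_M^{2/3} 2^{2N/3} (r − s). -/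
open MeasureTheory Real Set Filter

noncomputable section

namespace KS

open MeasureTheory Real Set intervalIntegral

lemma pi_pos' : (0:ℝ) < π := Real.pi_pos

lemma Qdom_subset_Strip : Qdom ⊆ Strip := by
  rintro ⟨x,y⟩ ⟨hx, hy⟩
  exact ⟨trivial, hy⟩

/-- closed version of the domain -/
def QC : Set (ℝ × ℝ) := Icc (-π) π ×ˢ Icc 0 π

lemma Qdom_subset_QC : Qdom ⊆ QC := by
  rintro ⟨x,y⟩ ⟨hx, hy⟩
  exact ⟨⟨le_of_lt hx.1, hx.2⟩, hy⟩

lemma isCompact_QC : IsCompact QC := IsCompact.prod isCompact_Icc isCompact_Icc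

lemma measurable_Qdom : MeasurableSet Qdom :=
  (measurableSet_Ioc).prod (measurableSet_Icc)

lemma volume_Qdom : (volume Qdom) = ENNReal.ofReal (2 * π ^ 2) := by
  rw [Qdom, Measure.volume_eq_prod, Measure.prod_prod, Real.volume_Ioc, Real.volume_Icc]
  rw [← ENNReal.ofReal_mul (by linarith [Real.pi_pos])]
  congr 1
  ring

lemma volume_Qdom_toReal : (volume Qdom).toReal = 2 * π ^ 2 := by
  rw [volume_Qdom, ENNReal.toReal_ofReal (by positivity)]

lemma volume_Qdom_lt_top : volume Qdom < ⊤ := by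
  rw [volume_Qdom]; exact ENNReal.ofReal_lt_top

lemma integrableOn_Qdom {f : ℝ × ℝ → ℝ} (hf : Continuous f) :
    IntegrableOn f Qdom := by
  exact (hf.continuousOn.integrableOn_compact isCompact_QC).mono_set Qdom_subset_QC

/-- slice derivative in the first variable -/
lemma hasDerivAt_slice1 {f : ℝ × ℝ → ℝ} {x y : ℝ} (hf : DifferentiableAt ℝ f (x, y)) :
    HasDerivAt (fun u => f (u, y)) (pd1 f (x, y)) x := by
  have h1 : HasDerivAt (fun u : ℝ => (u, y)) ((1:ℝ), (0:ℝ)) x :=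
    (hasDerivAt_id x).prodMk (hasDerivAt_const x y)
  exact hf.hasFDerivAt.comp_hasDerivAt x h1

lemma hasDerivAt_slice2 {f : ℝ × ℝ → ℝ} {x y : ℝ} (hf : DifferentiableAt ℝ f (x, y)) :
    HasDerivAt (fun v => f (x, v)) (pd2 f (x, y)) y := by
  have h1 : HasDerivAt (fun v : ℝ => (x, v)) ((0:ℝ), (1:ℝ)) y :=
    (hasDerivAt_const y x).prodMk (hasDerivAt_id y)
  exact hf.hasFDerivAt.comp_hasDerivAt y h1

lemma contDiff_pd1 {f : ℝ × ℝ → ℝ} (hf : ContDiff ℝ (⊤:ℕ∞) f) :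
    ContDiff ℝ (⊤:ℕ∞) (pd1 f) := by
  have h1 : ContDiff ℝ (⊤:ℕ∞) (fderiv ℝ f) := by
    apply hf.fderiv_right
    exact_mod_cast le_refl _
  exact (ContinuousLinearMap.apply ℝ ℝ ((1:ℝ),(0:ℝ))).contDiff.comp h1

lemma contDiff_pd2 {f : ℝ × ℝ → ℝ} (hf : ContDiff ℝ (⊤:ℕ∞) f) :
    ContDiff ℝ (⊤:ℕ∞) (pd2 f) := by
  have h1 : ContDiff ℝ (⊤:ℕ∞) (fderiv ℝ f) := by
    apply hf.fderiv_right
    exact_mod_cast le_refl _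
  exact (ContinuousLinearMap.apply ℝ ℝ ((0:ℝ),(1:ℝ))).contDiff.comp h1

lemma cont_pd1 {f : ℝ × ℝ → ℝ} (hf : ContDiff ℝ (⊤:ℕ∞) f) : Continuous (pd1 f) :=
  (contDiff_pd1 hf).continuous

lemma cont_pd2 {f : ℝ × ℝ → ℝ} (hf : ContDiff ℝ (⊤:ℕ∞) f) : Continuous (pd2 f) :=
  (contDiff_pd2 hf).continuous

/-- iterated integral over Qdom, x outer -/
lemma integral_Qdom_iter {g : ℝ × ℝ → ℝ} (hg : Continuous g) :
    ∫ p in Qdom, g p = ∫ x in Ioc (-π) π, ∫ y in Icc (0:ℝ) π, g (x, y) := by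
  rw [Qdom, Measure.volume_eq_prod ℝ ℝ]
  exact MeasureTheory.setIntegral_prod g (by
    rw [← Qdom]
    exact integrableOn_Qdom hg)

/-- iterated integral over Qdom, y outer -/
lemma integral_Qdom_iter' {g : ℝ × ℝ → ℝ} (hg : Continuous g) :
    ∫ p in Qdom, g p = ∫ y in Icc (0:ℝ) π, ∫ x in Ioc (-π) π, g (x, y) := by
  rw [integral_Qdom_iter hg]
  have hint : Integrable (Function.uncurry fun x y => g (x, y))
      ((volume.restrict (Ioc (-π) π)).prod (volume.restrict (Icc (0:ℝ) π))) := by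
    rw [Measure.prod_restrict]
    have : Function.uncurry (fun x y => g (x, y)) = g := by
      funext p; simp [Function.uncurry]
    rw [this]
    have := integrableOn_Qdom hg
    rw [Qdom] at this
    exact this
  exact MeasureTheory.integral_integral_swap hint

end KS
namespace KS

open MeasureTheory Real Set intervalIntegral

/-- FTC in the x-direction over Qdom -/
lemma integral_pd1 {f : ℝ × ℝ → ℝ} (hf : ContDiff ℝ (⊤:ℕ∞) f) :
    ∫ p in Qdom, pd1 f p = ∫ y in Icc (0:ℝ) π, (f (π, y) - f (-π, y)) := by
  rw [integral_Qdom_iter' (cont_pd1 hf)]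
  apply setIntegral_congr_fun measurableSet_Icc
  intro y _
  dsimp only
  have h1 : ∫ x in Ioc (-π) π, pd1 f (x, y) = ∫ x in (-π)..π, pd1 f (x, y) := by
    rw [intervalIntegral.integral_of_le (by linarith [Real.pi_pos])]
  rw [h1]
  have h2 : ∀ x ∈ uIcc (-π) π, DifferentiableAt ℝ (fun u => f (u, y)) x := by
    intro x _
    exact (hasDerivAt_slice1 (hf.differentiable (by simp) _)).differentiableAt
  have h3 : deriv (fun u => f (u, y)) = fun x => pd1 f (x, y) := by
    funext x
    exact (hasDerivAt_slice1 (hf.differentiable (by simp) _)).deriv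
  have h4 : IntervalIntegrable (deriv fun u => f (u, y)) volume (-π) π := by
    rw [h3]
    exact ((cont_pd1 hf).comp (by fun_prop)).continuousOn.intervalIntegrable
  calc ∫ x in (-π)..π, pd1 f (x, y) = ∫ x in (-π)..π, deriv (fun u => f (u, y)) x := by
        rw [h3]
    _ = f (π, y) - f (-π, y) := intervalIntegral.integral_deriv_eq_sub h2 h4

/-- FTC in the y-direction over Qdom -/
lemma integral_pd2 {f : ℝ × ℝ → ℝ} (hf : ContDiff ℝ (⊤:ℕ∞) f) :
    ∫ p in Qdom, pd2 f p = ∫ x in Ioc (-π) π, (f (x, π) - f (x, 0)) := by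
  rw [integral_Qdom_iter (cont_pd2 hf)]
  apply setIntegral_congr_fun measurableSet_Ioc
  intro x _
  dsimp only
  have hIccIoc : ∫ y in Icc (0:ℝ) π, pd2 f (x, y) = ∫ y in Ioc (0:ℝ) π, pd2 f (x, y) :=
    MeasureTheory.integral_Icc_eq_integral_Ioc
  rw [hIccIoc, ← intervalIntegral.integral_of_le (le_of_lt Real.pi_pos)]
  have h2 : ∀ y ∈ uIcc (0:ℝ) π, DifferentiableAt ℝ (fun v => f (x, v)) y := by
    intro y _
    exact (hasDerivAt_slice2 (hf.differentiable (by simp) _)).differentiableAt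
  have h3 : deriv (fun v => f (x, v)) = fun y => pd2 f (x, y) := by
    funext y
    exact (hasDerivAt_slice2 (hf.differentiable (by simp) _)).deriv
  have h4 : IntervalIntegrable (deriv fun v => f (x, v)) volume 0 π := by
    rw [h3]
    exact ((cont_pd2 hf).comp (by fun_prop)).continuousOn.intervalIntegrable
  calc ∫ y in (0:ℝ)..π, pd2 f (x, y) = ∫ y in (0:ℝ)..π, deriv (fun v => f (x, v)) y := by
        rw [h3]
    _ = f (x, π) - f (x, 0) := intervalIntegral.integral_deriv_eq_sub h2 h4

lemma integral_pd1_periodic {f : ℝ × ℝ → ℝ} (hf : ContDiff ℝ (⊤:ℕ∞) f)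
    (hp : Periodic2 f) : ∫ p in Qdom, pd1 f p = 0 := by
  rw [integral_pd1 hf]
  have : ∀ y : ℝ, f (π, y) - f (-π, y) = 0 := by
    intro y
    have := hp (-π, y)
    simp only at this
    rw [show -π + 2*π = π by ring] at this
    rw [this]; ring
  simp [this]

lemma integral_pd2_boundary {f : ℝ × ℝ → ℝ} (hf : ContDiff ℝ (⊤:ℕ∞) f)
    (hb : ∀ x : ℝ, f (x, 0) = 0 ∧ f (x, π) = 0) : ∫ p in Qdom, pd2 f p = 0 := by
  rw [integral_pd2 hf]
  have : ∀ x : ℝ, f (x, π) - f (x, 0) = 0 := by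
    intro x
    rw [(hb x).1, (hb x).2]; ring
  simp [this]

/-- derivatives of periodic functions are periodic -/
lemma fderiv_periodic {f : ℝ × ℝ → ℝ} (hf : Differentiable ℝ f) (hp : Periodic2 f)
    (p : ℝ × ℝ) : fderiv ℝ f (p.1 + 2*π, p.2) = fderiv ℝ f p := by
  have htr : f = fun q : ℝ × ℝ => f (q + (2*π, 0)) := by
    funext q
    have := hp q
    rw [show q + ((2*π : ℝ), (0:ℝ)) = (q.1 + 2*π, q.2) by
      ext <;> simp]
    exact this.symm
  have h1 : HasFDerivAt (fun q : ℝ × ℝ => f (q + (2*π, 0)))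
      (fderiv ℝ f (p + (2*π, 0))) p := by
    have := (hf (p + (2*π, 0))).hasFDerivAt
    exact this.comp p ((hasFDerivAt_id p).add_const (2*π, 0))
  rw [← htr] at h1
  have h2 := h1.fderiv
  rw [h2]
  congr 1
  ext <;> simp

lemma periodic2_pd1 {f : ℝ × ℝ → ℝ} (hf : Differentiable ℝ f) (hp : Periodic2 f) :
    Periodic2 (pd1 f) := by
  intro p
  unfold pd1
  rw [fderiv_periodic hf hp p]

lemma periodic2_pd2 {f : ℝ × ℝ → ℝ} (hf : Differentiable ℝ f) (hp : Periodic2 f) :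
    Periodic2 (pd2 f) := by
  intro p
  unfold pd2
  rw [fderiv_periodic hf hp p]

lemma periodic2_mul {f g : ℝ × ℝ → ℝ} (hf : Periodic2 f) (hg : Periodic2 g) :
    Periodic2 (fun p => f p * g p) := by
  intro p
  simp only
  rw [hf p, hg p]

lemma periodic2_add {f g : ℝ × ℝ → ℝ} (hf : Periodic2 f) (hg : Periodic2 g) :
    Periodic2 (fun p => f p + g p) := by
  intro p
  simp only
  rw [hf p, hg p]

lemma periodic2_sub {f g : ℝ × ℝ → ℝ} (hf : Periodic2 f) (hg : Periodic2 g) :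
    Periodic2 (fun p => f p - g p) := by
  intro p
  simp only
  rw [hf p, hg p]

lemma periodic2_const (a : ℝ) : Periodic2 (fun _ => a) := fun _ => rfl

lemma periodic2_smul {f : ℝ × ℝ → ℝ} (a : ℝ) (hf : Periodic2 f) :
    Periodic2 (fun p => a * f p) := by
  intro p; simp only; rw [hf p]

/-- product rule for pd1 -/
lemma pd1_mul {f g : ℝ × ℝ → ℝ} (hf : Differentiable ℝ f) (hg : Differentiable ℝ g)
    (p : ℝ × ℝ) :
    pd1 (fun q => f q * g q) p = pd1 f p * g p + f p * pd1 g p := by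
  unfold pd1
  rw [fderiv_fun_mul (hf p) (hg p)]
  simp only [ContinuousLinearMap.add_apply, ContinuousLinearMap.smul_apply, smul_eq_mul]
  ring

lemma pd2_mul {f g : ℝ × ℝ → ℝ} (hf : Differentiable ℝ f) (hg : Differentiable ℝ g)
    (p : ℝ × ℝ) :
    pd2 (fun q => f q * g q) p = pd2 f p * g p + f p * pd2 g p := by
  unfold pd2
  rw [fderiv_fun_mul (hf p) (hg p)]
  simp only [ContinuousLinearMap.add_apply, ContinuousLinearMap.smul_apply, smul_eq_mul]
  ring

/-- symmetry of second partial derivatives -/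
lemma pd_symm {f : ℝ × ℝ → ℝ} (hf : ContDiff ℝ (⊤:ℕ∞) f) (p : ℝ × ℝ) :
    pd1 (pd2 f) p = pd2 (pd1 f) p := by
  have hdf : ContDiff ℝ (⊤:ℕ∞) (fderiv ℝ f) := by
    apply hf.fderiv_right
    exact_mod_cast le_refl _
  have hdfd : DifferentiableAt ℝ (fderiv ℝ f) p :=
    (hdf.differentiable (by simp)) p
  have key : ∀ v w : ℝ × ℝ,
      fderiv ℝ (fun q => fderiv ℝ f q v) p w = (fderiv ℝ (fderiv ℝ f) p w) v := by
    intro v w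
    rw [fderiv_clm_apply hdfd (differentiableAt_const v)]
    simp
  have hsymm : ∀ v w : ℝ × ℝ,
      (fderiv ℝ (fderiv ℝ f) p v) w = (fderiv ℝ (fderiv ℝ f) p w) v := by
    intro v w
    apply second_derivative_symmetric (f := f) (f' := fderiv ℝ f)
    · intro y
      exact ((hf.differentiable (by simp)) y).hasFDerivAt
    · exact hdfd.hasFDerivAt
  unfold pd1 pd2
  rw [key, key, hsymm]

/-- derivative along a line where the function vanishes -/
lemma pd1_of_const_line {f : ℝ × ℝ → ℝ} (hf : Differentiable ℝ f) {y : ℝ}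
    (hline : ∀ x : ℝ, f (x, y) = 0) (x : ℝ) : pd1 f (x, y) = 0 := by
  have h1 := hasDerivAt_slice1 (f := f) (x := x) (y := y) (hf _)
  have h2 : (fun u => f (u, y)) = fun _ => (0:ℝ) := funext hline
  rw [h2] at h1
  have h3 : HasDerivAt (fun _ : ℝ => (0:ℝ)) 0 x := hasDerivAt_const x 0
  exact h1.unique h3

end KS
namespace KS

open MeasureTheory Real Set intervalIntegral

/-- Cauchy-Schwarz for integrals -/
lemma cs {α : Type*} [MeasurableSpace α] (μ : Measure α) (f g : α → ℝ)
    (hfg : Integrable (fun a => f a * g a) μ)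
    (hf2 : Integrable (fun a => (f a)^2) μ) (hg2 : Integrable (fun a => (g a)^2) μ) :
    (∫ a, f a * g a ∂μ)^2 ≤ (∫ a, (f a)^2 ∂μ) * (∫ a, (g a)^2 ∂μ) := by
  set a := ∫ a, (f a)^2 ∂μ with ha
  set b := ∫ a, (g a)^2 ∂μ with hb
  set c := ∫ a, f a * g a ∂μ with hc
  have ha0 : 0 ≤ a := integral_nonneg (fun x => sq_nonneg _)
  have hb0 : 0 ≤ b := integral_nonneg (fun x => sq_nonneg _)
  rcases eq_or_lt_of_le ha0 with hA | hA
  · -- a = 0 : f = 0 a.e.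
    have hf0 : (fun x => (f x)^2) =ᵐ[μ] 0 := by
      have := (integral_eq_zero_iff_of_nonneg (fun x => sq_nonneg (f x)) hf2).mp hA.symm
      exact this
    have hfg0 : (fun x => f x * g x) =ᵐ[μ] 0 := by
      filter_upwards [hf0] with x hx
      have : f x = 0 := by
        have : (f x)^2 = 0 := hx
        exact pow_eq_zero_iff (by norm_num) |>.mp this
      simp [this]
    have : c = 0 := by
      rw [hc, integral_congr_ae hfg0]
      simp
    rw [this]
    have : (0:ℝ)^2 = 0 := by norm_num
    rw [this]
    positivity
  · -- a > 0
    have key : 0 ≤ ∫ x, (g x - (c/a) * f x)^2 ∂μ := integral_nonneg (fun x => sq_nonneg _)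
    have expand : ∫ x, (g x - (c/a) * f x)^2 ∂μ = b - 2*(c/a)*c + (c/a)^2 * a := by
      have h1 : ∀ x, (g x - (c/a) * f x)^2 =
          (g x)^2 - (2*(c/a)) * (f x * g x) + (c/a)^2 * (f x)^2 := by
        intro x; ring
      rw [integral_congr_ae (Filter.Eventually.of_forall h1)]
      have I0 : Integrable (fun x => 2*(c/a) * (f x * g x)) μ := hfg.const_mul _
      have I1 : Integrable (fun x => g x^2 - 2*(c/a)*(f x * g x)) μ := hg2.sub I0
      have I2 : Integrable (fun x => (c/a)^2 * (f x)^2) μ := hf2.const_mul _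
      rw [MeasureTheory.integral_add I1 I2, MeasureTheory.integral_sub hg2 I0,
        MeasureTheory.integral_const_mul, MeasureTheory.integral_const_mul]
    rw [expand] at key
    have : 0 ≤ b - c^2/a := by
      have : b - 2*(c/a)*c + (c/a)^2 * a = b - c^2/a := by
        field_simp
        ring
      linarith [this ▸ key]
    calc c^2 = (c^2/a) * a := by field_simp
    _ ≤ b * a := by apply mul_le_mul_of_nonneg_right _ ha0; linarith
    _ = a * b := mul_comm _ _

lemma cs_abs {α : Type*} [MeasurableSpace α] (μ : Measure α) (f g : α → ℝ)
    (hfg : Integrable (fun a => |f a * g a|) μ)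
    (hf2 : Integrable (fun a => (f a)^2) μ) (hg2 : Integrable (fun a => (g a)^2) μ) :
    ∫ a, |f a * g a| ∂μ ≤ Real.sqrt (∫ a, (f a)^2 ∂μ) * Real.sqrt (∫ a, (g a)^2 ∂μ) := by
  have h1 : (∫ a, |f a| * |g a| ∂μ)^2 ≤ (∫ a, (|f a|)^2 ∂μ) * (∫ a, (|g a|)^2 ∂μ) := by
    apply cs μ (fun a => |f a|) (fun a => |g a|)
    · simpa [abs_mul] using hfg
    · simpa [sq_abs] using hf2
    · simpa [sq_abs] using hg2
  simp only [sq_abs] at h1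
  have h2 : ∫ a, |f a * g a| ∂μ = ∫ a, |f a| * |g a| ∂μ := by
    congr 1; funext x; exact abs_mul _ _
  rw [h2]
  have h3 : 0 ≤ ∫ a, |f a| * |g a| ∂μ :=
    integral_nonneg (fun x => mul_nonneg (abs_nonneg _) (abs_nonneg _))
  have := Real.sqrt_le_sqrt h1
  rw [Real.sqrt_sq h3, Real.sqrt_mul (integral_nonneg (fun x => sq_nonneg _))] at this
  exact this

lemma integrableOn_Icc_1d {F : ℝ → ℝ} (hF : Continuous F) (a b : ℝ) :
    IntegrableOn F (Icc a b) :=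
  hF.continuousOn.integrableOn_compact isCompact_Icc

lemma integrableOn_Ioc_1d {F : ℝ → ℝ} (hF : Continuous F) (a b : ℝ) :
    IntegrableOn F (Ioc a b) :=
  (integrableOn_Icc_1d hF a b).mono_set Ioc_subset_Icc_self

/-- parametric continuity: inner integral in x -/
lemma cont_param_x {g : ℝ × ℝ → ℝ} (hg : Continuous g) (a b : ℝ) :
    Continuous (fun y => ∫ x in Ioc a b, g (x, y)) := by
  rw [continuous_iff_continuousAt]
  intro y₀
  apply continuousAt_of_dominated (bound := fun _ =>
    sSup ((fun p => |g p|) '' (Icc a b ×ˢ Icc (y₀-1) (y₀+1))) )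
  · filter_upwards with y
    exact ((hg.comp (by fun_prop)).aestronglyMeasurable : AEStronglyMeasurable
      (fun x => g (x,y)) _)
  · have hK : IsCompact (Icc a b ×ˢ Icc (y₀-1) (y₀+1)) := isCompact_Icc.prod isCompact_Icc
    have hcont : ContinuousOn (fun p => |g p|) (Icc a b ×ˢ Icc (y₀-1) (y₀+1)) :=
      (hg.abs).continuousOn
    filter_upwards [Icc_mem_nhds (show y₀ - 1 < y₀ by linarith) (show y₀ < y₀+1 by linarith)]
      with y hy
    rw [ae_restrict_iff' measurableSet_Ioc]
    filter_upwards with x hx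
    have hmem : (x, y) ∈ Icc a b ×ˢ Icc (y₀-1) (y₀+1) :=
      ⟨Ioc_subset_Icc_self hx, hy⟩
    calc ‖g (x,y)‖ = |g (x,y)| := rfl
      _ ≤ sSup ((fun p => |g p|) '' (Icc a b ×ˢ Icc (y₀-1) (y₀+1))) := by
          apply le_csSup
          · exact (hK.image_of_continuousOn hcont).bddAbove
          · exact ⟨_, hmem, rfl⟩
  · exact integrableOn_const (ne_of_lt (by
      rw [Real.volume_Ioc]; exact ENNReal.ofReal_lt_top))
  · filter_upwards with x
    exact (hg.comp (by fun_prop)).continuousAt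

/-- parametric continuity: inner integral in y -/
lemma cont_param_y {g : ℝ × ℝ → ℝ} (hg : Continuous g) (a b : ℝ) :
    Continuous (fun x => ∫ y in Icc a b, g (x, y)) := by
  rw [continuous_iff_continuousAt]
  intro x₀
  apply continuousAt_of_dominated (bound := fun _ =>
    sSup ((fun p => |g p|) '' (Icc (x₀-1) (x₀+1) ×ˢ Icc a b)) )
  · filter_upwards with x
    exact ((hg.comp (by fun_prop)).aestronglyMeasurable : AEStronglyMeasurable
      (fun y => g (x,y)) _)
  · have hK : IsCompact (Icc (x₀-1) (x₀+1) ×ˢ Icc a b) := isCompact_Icc.prod isCompact_Icc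
    have hcont : ContinuousOn (fun p => |g p|) (Icc (x₀-1) (x₀+1) ×ˢ Icc a b) :=
      (hg.abs).continuousOn
    filter_upwards [Icc_mem_nhds (show x₀ - 1 < x₀ by linarith) (show x₀ < x₀+1 by linarith)]
      with x hx
    rw [ae_restrict_iff' measurableSet_Icc]
    filter_upwards with y hy
    have hmem : (x, y) ∈ Icc (x₀-1) (x₀+1) ×ˢ Icc a b := ⟨hx, hy⟩
    calc ‖g (x,y)‖ = |g (x,y)| := rfl
      _ ≤ sSup ((fun p => |g p|) '' (Icc (x₀-1) (x₀+1) ×ˢ Icc a b)) := by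
          apply le_csSup
          · exact (hK.image_of_continuousOn hcont).bddAbove
          · exact ⟨_, hmem, rfl⟩
  · exact integrableOn_const (ne_of_lt (by
      rw [Real.volume_Icc]; exact ENNReal.ofReal_lt_top))
  · filter_upwards with y
    exact (hg.comp (by fun_prop)).continuousAt

/-- interval integral bounded by integral of abs over enclosing interval -/
lemma abs_intervalIntegral_le {F : ℝ → ℝ} (hF : Continuous F) {lo hi a b : ℝ}
    (ha : a ∈ Icc lo hi) (hb : b ∈ Icc lo hi) :
    |∫ v in a..b, F v| ≤ ∫ v in Icc lo hi, |F v| := by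
  have key : ∀ c d : ℝ, c ≤ d → c ∈ Icc lo hi → d ∈ Icc lo hi →
      |∫ v in c..d, F v| ≤ ∫ v in Icc lo hi, |F v| := by
    intro c d hcd hc hd
    calc |∫ v in c..d, F v| ≤ ∫ v in c..d, |F v| :=
          intervalIntegral.abs_integral_le_integral_abs hcd
      _ = ∫ v in Ioc c d, |F v| := intervalIntegral.integral_of_le hcd
      _ ≤ ∫ v in Icc lo hi, |F v| := by
          apply setIntegral_mono_set (integrableOn_Icc_1d hF.abs lo hi)
          · filter_upwards with v using abs_nonneg _
          · filter_upwards with v hv using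
              (Icc_subset_Icc hc.1 hd.2) (Ioc_subset_Icc_self hv)
  rcases le_total a b with h | h
  · exact key a b h ha hb
  · rw [intervalIntegral.integral_symm]
    rw [abs_neg]
    exact key b a h hb ha

end KS
namespace KS

open MeasureTheory Real Set intervalIntegral

/-- pointwise FTC for squares along vertical segments -/
lemma sq_diff_vert {h : ℝ × ℝ → ℝ} (hh : ContDiff ℝ (⊤:ℕ∞) h) (x y₁ y₂ : ℝ)
    (hy₁ : y₁ ∈ Icc (0:ℝ) π) (hy₂ : y₂ ∈ Icc (0:ℝ) π) :
    (h (x, y₂))^2 - (h (x, y₁))^2 ≤ ∫ v in Icc (0:ℝ) π, |2 * h (x,v) * pd2 h (x,v)| := by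
  have hdiff : ∀ v : ℝ, HasDerivAt (fun v => (h (x, v))^2)
      (2 * h (x,v) * pd2 h (x,v)) v := by
    intro v
    have h1 : HasDerivAt (fun v => h (x, v)) (pd2 h (x,v)) v :=
      hasDerivAt_slice2 ((hh.differentiable (by simp)) _)
    have := h1.fun_mul h1
    have e : (fun w => (h (x, w))^2) = fun i => h (x, i) * h (x, i) := by funext u; ring
    rw [e]; exact this.congr_deriv (by ring)
  have hcont : Continuous (fun v => 2 * h (x,v) * pd2 h (x,v)) := by
    apply Continuous.mul
    · exact (continuous_const.mul (hh.continuous.comp (by fun_prop)))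
    · exact (cont_pd2 hh).comp (by fun_prop)
  have hftc : (h (x, y₂))^2 - (h (x, y₁))^2
      = ∫ v in y₁..y₂, 2 * h (x,v) * pd2 h (x,v) := by
    rw [← intervalIntegral.integral_deriv_eq_sub
      (f := fun v => (h (x,v))^2) (fun v _ => (hdiff v).differentiableAt) ?_]
    · apply intervalIntegral.integral_congr
      intro v _
      exact (hdiff v).deriv
    · apply ContinuousOn.intervalIntegrable
      have : deriv (fun v => (h (x,v))^2) = fun v => 2 * h (x,v) * pd2 h (x,v) :=
        funext fun v => (hdiff v).deriv
      rw [this]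
      exact hcont.continuousOn
  rw [hftc]
  calc ∫ v in y₁..y₂, 2 * h (x,v) * pd2 h (x,v)
      ≤ |∫ v in y₁..y₂, 2 * h (x,v) * pd2 h (x,v)| := le_abs_self _
    _ ≤ ∫ v in Icc (0:ℝ) π, |2 * h (x,v) * pd2 h (x,v)| :=
        abs_intervalIntegral_le hcont hy₁ hy₂

/-- pointwise FTC for squares along horizontal segments -/
lemma sq_diff_horiz {h : ℝ × ℝ → ℝ} (hh : ContDiff ℝ (⊤:ℕ∞) h) (y x₁ x₂ : ℝ)
    (hx₁ : x₁ ∈ Icc (-π) π) (hx₂ : x₂ ∈ Icc (-π) π) :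
    (h (x₂, y))^2 - (h (x₁, y))^2 ≤ ∫ u in Icc (-π) π, |2 * h (u,y) * pd1 h (u,y)| := by
  have hdiff : ∀ u : ℝ, HasDerivAt (fun u => (h (u, y))^2)
      (2 * h (u,y) * pd1 h (u,y)) u := by
    intro u
    have h1 : HasDerivAt (fun u => h (u, y)) (pd1 h (u,y)) u :=
      hasDerivAt_slice1 ((hh.differentiable (by simp)) _)
    have := h1.fun_mul h1
    have e : (fun w => (h (w, y))^2) = fun i => h (i, y) * h (i, y) := by funext u; ring
    rw [e]; exact this.congr_deriv (by ring)
  have hcont : Continuous (fun u => 2 * h (u,y) * pd1 h (u,y)) := by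
    apply Continuous.mul
    · exact (continuous_const.mul (hh.continuous.comp (by fun_prop)))
    · exact (cont_pd1 hh).comp (by fun_prop)
  have hftc : (h (x₂, y))^2 - (h (x₁, y))^2
      = ∫ u in x₁..x₂, 2 * h (u,y) * pd1 h (u,y) := by
    rw [← intervalIntegral.integral_deriv_eq_sub
      (f := fun u => (h (u,y))^2) (fun u _ => (hdiff u).differentiableAt) ?_]
    · apply intervalIntegral.integral_congr
      intro u _
      exact (hdiff u).deriv
    · apply ContinuousOn.intervalIntegrable
      have : deriv (fun u => (h (u,y))^2) = fun u => 2 * h (u,y) * pd1 h (u,y) :=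
        funext fun u => (hdiff u).deriv
      rw [this]
      exact hcont.continuousOn
  rw [hftc]
  calc ∫ u in x₁..x₂, 2 * h (u,y) * pd1 h (u,y)
      ≤ |∫ u in x₁..x₂, 2 * h (u,y) * pd1 h (u,y)| := le_abs_self _
    _ ≤ ∫ u in Icc (-π) π, |2 * h (u,y) * pd1 h (u,y)| :=
        abs_intervalIntegral_le hcont hx₁ hx₂

/-- the x-slice L² norms of h at any height are controlled by mean + derivative term -/
lemma slice_x2 {h : ℝ × ℝ → ℝ} (hh : ContDiff ℝ (⊤:ℕ∞) h) {x₂ : ℝ}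
    (hx₂ : x₂ ∈ Icc (0:ℝ) π) :
    ∫ x in Ioc (-π) π, (h (x, x₂))^2 ≤
      (1/π) * (∫ p in Qdom, (h p)^2) + ∫ p in Qdom, |2 * h p * pd2 h p| := by
  set B := ∫ p in Qdom, |2 * h p * pd2 h p| with hB
  set A : ℝ → ℝ := fun y => ∫ x in Ioc (-π) π, (h (x, y))^2 with hA
  have hAcont : Continuous A := cont_param_x (hh.continuous.pow 2) _ _
  have hBiter : B = ∫ x in Ioc (-π) π, ∫ v in Icc (0:ℝ) π, |2 * h (x,v) * pd2 h (x,v)| := by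
    rw [hB]
    exact integral_Qdom_iter (by
      have : Continuous fun p : ℝ×ℝ => 2 * h p * pd2 h p := by
        exact (continuous_const.mul hh.continuous).mul (cont_pd2 hh)
      exact this.abs)
  -- step 1 : A x₂ ≤ A y + B for every y in [0, π]
  have step1 : ∀ y ∈ Icc (0:ℝ) π, A x₂ ≤ A y + B := by
    intro y hy
    have hsub : A x₂ - A y = ∫ x in Ioc (-π) π,
        ((h (x, x₂))^2 - (h (x, y))^2) := by
      rw [hA]
      dsimp only
      rw [← MeasureTheory.integral_sub]
      · exact integrableOn_Ioc_1d ((hh.continuous.pow 2).comp (by fun_prop)) _ _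
      · exact integrableOn_Ioc_1d ((hh.continuous.pow 2).comp (by fun_prop)) _ _
    have hmono : ∫ x in Ioc (-π) π, ((h (x, x₂))^2 - (h (x, y))^2) ≤
        ∫ x in Ioc (-π) π, ∫ v in Icc (0:ℝ) π, |2 * h (x,v) * pd2 h (x,v)| := by
      apply setIntegral_mono_on
      · exact (integrableOn_Ioc_1d ((hh.continuous.pow 2).comp (by fun_prop)) _ _).sub
          (integrableOn_Ioc_1d ((hh.continuous.pow 2).comp (by fun_prop)) _ _)
      · apply integrableOn_Ioc_1d
        exact cont_param_y (by
          have : Continuous fun p : ℝ×ℝ => 2 * h p * pd2 h p :=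
            (continuous_const.mul hh.continuous).mul (cont_pd2 hh)
          exact this.abs) _ _
      · exact measurableSet_Ioc
      · intro x _
        exact sq_diff_vert hh x y x₂ hy hx₂
    rw [hBiter]
    linarith [hsub ▸ hmono]
  -- step 2 : integrate over y
  have hvol : (volume (Icc (0:ℝ) π)).toReal = π := by
    rw [Real.volume_Icc, ENNReal.toReal_ofReal (by linarith [Real.pi_pos])]
    ring
  have step2 : π * (A x₂ - B) ≤ ∫ p in Qdom, (h p)^2 := by
    have hmono2 : ∫ y in Icc (0:ℝ) π, (A x₂ - B) ≤ ∫ y in Icc (0:ℝ) π, A y := by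
      apply setIntegral_mono_on
      · exact integrableOn_const (ne_of_lt (by
          rw [Real.volume_Icc]; exact ENNReal.ofReal_lt_top))
      · exact integrableOn_Icc_1d hAcont _ _
      · exact measurableSet_Icc
      · intro y hy
        linarith [step1 y hy]
    rw [MeasureTheory.setIntegral_const, measureReal_def, hvol, smul_eq_mul] at hmono2
    have : ∫ y in Icc (0:ℝ) π, A y = ∫ p in Qdom, (h p)^2 := by
      rw [hA]
      exact (integral_Qdom_iter' (hh.continuous.pow 2)).symm
    linarith [this ▸ hmono2]
  have hπ : (0:ℝ) < π := Real.pi_pos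
  calc A x₂ = (1/π) * (π * (A x₂ - B)) + B := by field_simp; ring
    _ ≤ (1/π) * (∫ p in Qdom, (h p)^2) + B := by
        have := mul_le_mul_of_nonneg_left step2 (le_of_lt (by positivity : (0:ℝ) < 1/π))
        linarith

/-- the y-slice L² norms of h at any abscissa are controlled by mean + derivative term -/
lemma slice_x1 {h : ℝ × ℝ → ℝ} (hh : ContDiff ℝ (⊤:ℕ∞) h) {x₁ : ℝ}
    (hx₁ : x₁ ∈ Icc (-π) π) :
    ∫ y in Icc (0:ℝ) π, (h (x₁, y))^2 ≤
      (1/(2*π)) * (∫ p in Qdom, (h p)^2) + ∫ p in Qdom, |2 * h p * pd1 h p| := by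
  set B := ∫ p in Qdom, |2 * h p * pd1 h p| with hB
  set A : ℝ → ℝ := fun x => ∫ y in Icc (0:ℝ) π, (h (x, y))^2 with hA
  have hAcont : Continuous A := cont_param_y (hh.continuous.pow 2) _ _
  have hBiter : B = ∫ y in Icc (0:ℝ) π, ∫ u in Ioc (-π) π, |2 * h (u,y) * pd1 h (u,y)| := by
    rw [hB]
    exact integral_Qdom_iter' (by
      have : Continuous fun p : ℝ×ℝ => 2 * h p * pd1 h p :=
        (continuous_const.mul hh.continuous).mul (cont_pd1 hh)
      exact this.abs)
  have hIocIcc : ∀ (F : ℝ → ℝ), Continuous F →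
      ∫ u in Ioc (-π) π, F u = ∫ u in Icc (-π) π, F u := by
    intro F hF
    exact (MeasureTheory.integral_Icc_eq_integral_Ioc).symm
  -- step 1
  have step1 : ∀ x ∈ Icc (-π) π, A x₁ ≤ A x + B := by
    intro x hx
    have hsub : A x₁ - A x = ∫ y in Icc (0:ℝ) π,
        ((h (x₁, y))^2 - (h (x, y))^2) := by
      rw [hA]
      dsimp only
      rw [← MeasureTheory.integral_sub]
      · exact integrableOn_Icc_1d ((hh.continuous.pow 2).comp (by fun_prop)) _ _
      · exact integrableOn_Icc_1d ((hh.continuous.pow 2).comp (by fun_prop)) _ _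
    have hmono : ∫ y in Icc (0:ℝ) π, ((h (x₁, y))^2 - (h (x, y))^2) ≤
        ∫ y in Icc (0:ℝ) π, ∫ u in Icc (-π) π, |2 * h (u,y) * pd1 h (u,y)| := by
      apply setIntegral_mono_on
      · exact (integrableOn_Icc_1d ((hh.continuous.pow 2).comp (by fun_prop)) _ _).sub
          (integrableOn_Icc_1d ((hh.continuous.pow 2).comp (by fun_prop)) _ _)
      · apply integrableOn_Icc_1d
        have habs : Continuous fun p : ℝ×ℝ => |2 * h p * pd1 h p| := by
          exact ((continuous_const.mul hh.continuous).mul (cont_pd1 hh)).abs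
        have : Continuous fun y => ∫ u in Ioc (-π) π, |2 * h (u,y) * pd1 h (u,y)| :=
          cont_param_x habs _ _
        have heq : (fun y => ∫ u in Icc (-π) π, |2 * h (u,y) * pd1 h (u,y)|)
            = fun y => ∫ u in Ioc (-π) π, |2 * h (u,y) * pd1 h (u,y)| := by
          funext y
          exact MeasureTheory.integral_Icc_eq_integral_Ioc
        rw [heq]
        exact this
      · exact measurableSet_Icc
      · intro y _
        exact sq_diff_horiz hh y x x₁ hx hx₁
    rw [hBiter]
    have hswap : ∫ y in Icc (0:ℝ) π, ∫ u in Icc (-π) π, |2 * h (u,y) * pd1 h (u,y)|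
        = ∫ y in Icc (0:ℝ) π, ∫ u in Ioc (-π) π, |2 * h (u,y) * pd1 h (u,y)| := by
      apply setIntegral_congr_fun measurableSet_Icc
      intro y _
      exact (MeasureTheory.integral_Icc_eq_integral_Ioc)
    linarith [hsub ▸ (hswap ▸ hmono)]
  -- step 2 : integrate over x
  have hvol : (volume (Ioc (-π) π)).toReal = 2*π := by
    rw [Real.volume_Ioc, ENNReal.toReal_ofReal (by linarith [Real.pi_pos])]
    ring
  have step2 : (2*π) * (A x₁ - B) ≤ ∫ p in Qdom, (h p)^2 := by
    have hmono2 : ∫ x in Ioc (-π) π, (A x₁ - B) ≤ ∫ x in Ioc (-π) π, A x := by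
      apply setIntegral_mono_on
      · exact integrableOn_const (ne_of_lt (by
          rw [Real.volume_Ioc]; exact ENNReal.ofReal_lt_top))
      · exact integrableOn_Ioc_1d hAcont _ _
      · exact measurableSet_Ioc
      · intro x hx
        linarith [step1 x (Ioc_subset_Icc_self hx)]
    rw [MeasureTheory.setIntegral_const, measureReal_def, hvol, smul_eq_mul] at hmono2
    have : ∫ x in Ioc (-π) π, A x = ∫ p in Qdom, (h p)^2 := by
      rw [hA]
      exact (integral_Qdom_iter (hh.continuous.pow 2)).symm
    linarith [this ▸ hmono2]
  have hπ : (0:ℝ) < π := Real.pi_pos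
  calc A x₁ = (1/(2*π)) * ((2*π) * (A x₁ - B)) + B := by field_simp; ring
    _ ≤ (1/(2*π)) * (∫ p in Qdom, (h p)^2) + B := by
        have := mul_le_mul_of_nonneg_left step2 (le_of_lt (by positivity : (0:ℝ) < 1/(2*π)))
        linarith

end KS
namespace KS

open MeasureTheory Real Set intervalIntegral

section elliptic

variable {c dev : ℝ × ℝ → ℝ}

/-- Green's identity : ∫ |∇c|² = ∫ dev * c for periodic+Neumann c with -Δc = dev -/
lemma green (hcC : ContDiff ℝ (⊤:ℕ∞) c) (hcper : Periodic2 c)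
    (hceq : ∀ p ∈ Strip, -(lap2 c p) = dev p)
    (hcbc : ∀ x : ℝ, pd2 c (x, 0) = 0 ∧ pd2 c (x, π) = 0) :
    (∫ p in Qdom, (pd1 c p)^2) + (∫ p in Qdom, (pd2 c p)^2)
      = ∫ p in Qdom, dev p * c p := by
  have hcd : Differentiable ℝ c := hcC.differentiable (by simp)
  have hc1C : ContDiff ℝ (⊤:ℕ∞) (pd1 c) := contDiff_pd1 hcC
  have hc2C : ContDiff ℝ (⊤:ℕ∞) (pd2 c) := contDiff_pd2 hcC
  have hcc : Continuous c := hcC.continuous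
  have hc1 : Continuous (pd1 c) := hc1C.continuous
  have hc2 : Continuous (pd2 c) := hc2C.continuous
  have hc11 : Continuous (pd1 (pd1 c)) := cont_pd1 hc1C
  have hc22 : Continuous (pd2 (pd2 c)) := cont_pd2 hc2C
  -- first identity
  have key1 : (∫ p in Qdom, (pd1 c p)^2) + (∫ p in Qdom, c p * pd1 (pd1 c) p) = 0 := by
    have hw : ContDiff ℝ (⊤:ℕ∞) (fun q => c q * pd1 c q) := hcC.mul hc1C
    have hwper : Periodic2 (fun q => c q * pd1 c q) :=
      periodic2_mul hcper (periodic2_pd1 hcd hcper)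
    have h0 := integral_pd1_periodic hw hwper
    have hsplit : ∫ p in Qdom, pd1 (fun q => c q * pd1 c q) p
        = (∫ p in Qdom, (pd1 c p)^2) + (∫ p in Qdom, c p * pd1 (pd1 c) p) := by
      rw [← MeasureTheory.integral_add (integrableOn_Qdom (by fun_prop))
        (integrableOn_Qdom (by fun_prop))]
      apply setIntegral_congr_fun measurable_Qdom
      intro p _
      try dsimp only
      rw [pd1_mul hcd (hc1C.differentiable (by simp))]
      ring
    rw [hsplit] at h0
    exact h0
  -- second identity
  have key2 : (∫ p in Qdom, (pd2 c p)^2) + (∫ p in Qdom, c p * pd2 (pd2 c) p) = 0 := by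
    have hw : ContDiff ℝ (⊤:ℕ∞) (fun q => c q * pd2 c q) := hcC.mul hc2C
    have h0 : ∫ p in Qdom, pd2 (fun q => c q * pd2 c q) p = 0 := by
      apply integral_pd2_boundary hw
      intro x
      try dsimp only
      rw [(hcbc x).1, (hcbc x).2]
      simp
    have hsplit : ∫ p in Qdom, pd2 (fun q => c q * pd2 c q) p
        = (∫ p in Qdom, (pd2 c p)^2) + (∫ p in Qdom, c p * pd2 (pd2 c) p) := by
      rw [← MeasureTheory.integral_add (integrableOn_Qdom (by fun_prop))
        (integrableOn_Qdom (by fun_prop))]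
      apply setIntegral_congr_fun measurable_Qdom
      intro p _
      try dsimp only
      rw [pd2_mul hcd (hc2C.differentiable (by simp))]
      ring
    rw [hsplit] at h0
    exact h0
  -- combine
  have hlap : ∫ p in Qdom, (c p * pd1 (pd1 c) p + c p * pd2 (pd2 c) p)
      = - ∫ p in Qdom, dev p * c p := by
    rw [← MeasureTheory.integral_neg]
    apply setIntegral_congr_fun measurable_Qdom
    intro p hp
    have heq := hceq p (Qdom_subset_Strip hp)
    unfold lap2 at heq
    try dsimp only
    rw [← heq]
    ring
  have hsum : (∫ p in Qdom, (c p * pd1 (pd1 c) p + c p * pd2 (pd2 c) p))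
      = (∫ p in Qdom, c p * pd1 (pd1 c) p) + ∫ p in Qdom, c p * pd2 (pd2 c) p := by
    exact MeasureTheory.integral_add (integrableOn_Qdom (by fun_prop))
      (integrableOn_Qdom (by fun_prop))
  have := hsum.symm.trans hlap
  linarith [key1, key2, this]

/-- Mixed second derivative bound : ∫ (∂₁∂₂ c)² ≤ (∫ dev²)/4 -/
lemma mixed_bound (hcC : ContDiff ℝ (⊤:ℕ∞) c) (hcper : Periodic2 c)
    (hceq : ∀ p ∈ Strip, -(lap2 c p) = dev p)
    (hcbc : ∀ x : ℝ, pd2 c (x, 0) = 0 ∧ pd2 c (x, π) = 0) :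
    ∫ p in Qdom, (pd1 (pd2 c) p)^2 ≤ (∫ p in Qdom, (dev p)^2) / 4 := by
  have hcd : Differentiable ℝ c := hcC.differentiable (by simp)
  have hc1C : ContDiff ℝ (⊤:ℕ∞) (pd1 c) := contDiff_pd1 hcC
  have hc2C : ContDiff ℝ (⊤:ℕ∞) (pd2 c) := contDiff_pd2 hcC
  have hc11C : ContDiff ℝ (⊤:ℕ∞) (pd1 (pd1 c)) := contDiff_pd1 hc1C
  have hc12C : ContDiff ℝ (⊤:ℕ∞) (pd1 (pd2 c)) := contDiff_pd1 hc2C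
  have hc21C : ContDiff ℝ (⊤:ℕ∞) (pd2 (pd1 c)) := contDiff_pd2 hc1C
  have hc22C : ContDiff ℝ (⊤:ℕ∞) (pd2 (pd2 c)) := contDiff_pd2 hc2C
  have hcc : Continuous c := hcC.continuous
  have hc1 : Continuous (pd1 c) := hc1C.continuous
  have hc2 : Continuous (pd2 c) := hc2C.continuous
  have hc11 : Continuous (pd1 (pd1 c)) := hc11C.continuous
  have hc12 : Continuous (pd1 (pd2 c)) := hc12C.continuous
  have hc21 : Continuous (pd2 (pd1 c)) := hc21C.continuous
  have hc22 : Continuous (pd2 (pd2 c)) := hc22C.continuous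
  have hc112 : Continuous (pd2 (pd1 (pd1 c))) := cont_pd2 hc11C
  have hc121 : Continuous (pd1 (pd2 (pd1 c))) := cont_pd1 hc21C
  set T := ∫ p in Qdom, pd1 (pd1 c) p * pd2 (pd2 c) p with hT
  set M2 := ∫ p in Qdom, (pd1 (pd2 c) p)^2 with hM2
  -- step A : T = - ∫ pd2(pd1(pd1 c)) * pd2 c
  have stepA : T + (∫ p in Qdom, pd2 (pd1 (pd1 c)) p * pd2 c p) = 0 := by
    have hw : ContDiff ℝ (⊤:ℕ∞) (fun q => pd1 (pd1 c) q * pd2 c q) := hc11C.mul hc2C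
    have h0 : ∫ p in Qdom, pd2 (fun q => pd1 (pd1 c) q * pd2 c q) p = 0 := by
      apply integral_pd2_boundary hw
      intro x
      try dsimp only
      rw [(hcbc x).1, (hcbc x).2]
      simp
    have hsplit : ∫ p in Qdom, pd2 (fun q => pd1 (pd1 c) q * pd2 c q) p
        = (∫ p in Qdom, pd2 (pd1 (pd1 c)) p * pd2 c p) + T := by
      rw [hT, ← MeasureTheory.integral_add (integrableOn_Qdom (by fun_prop))
        (integrableOn_Qdom (by fun_prop))]
      apply setIntegral_congr_fun measurable_Qdom
      intro p _
      try dsimp only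
      rw [pd2_mul (hc11C.differentiable (by simp))
        (hc2C.differentiable (by simp))]
      try ring
    rw [hsplit] at h0
    linarith
  -- step B : ∫ pd1(pd2(pd1 c)) * pd2 c + ∫ pd2(pd1 c) * pd1 (pd2 c) = 0
  have stepB : (∫ p in Qdom, pd1 (pd2 (pd1 c)) p * pd2 c p)
      + (∫ p in Qdom, pd2 (pd1 c) p * pd1 (pd2 c) p) = 0 := by
    have hw : ContDiff ℝ (⊤:ℕ∞) (fun q => pd2 (pd1 c) q * pd2 c q) := hc21C.mul hc2C
    have hwper : Periodic2 (fun q => pd2 (pd1 c) q * pd2 c q) := by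
      apply periodic2_mul
      · exact periodic2_pd2 (hc1C.differentiable (by simp))
          (periodic2_pd1 hcd hcper)
      · exact periodic2_pd2 hcd hcper
    have h0 := integral_pd1_periodic hw hwper
    have hsplit : ∫ p in Qdom, pd1 (fun q => pd2 (pd1 c) q * pd2 c q) p
        = (∫ p in Qdom, pd1 (pd2 (pd1 c)) p * pd2 c p)
          + ∫ p in Qdom, pd2 (pd1 c) p * pd1 (pd2 c) p := by
      rw [← MeasureTheory.integral_add (integrableOn_Qdom (by fun_prop))
        (integrableOn_Qdom (by fun_prop))]
      apply setIntegral_congr_fun measurable_Qdom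
      intro p _
      try dsimp only
      rw [pd1_mul (hc21C.differentiable (by simp))
        (hc2C.differentiable (by simp))]
      try ring
    rw [hsplit] at h0
    exact h0
  -- identify T = M2
  have hTM : T = M2 := by
    have h1 : ∫ p in Qdom, pd1 (pd2 (pd1 c)) p * pd2 c p
        = ∫ p in Qdom, pd2 (pd1 (pd1 c)) p * pd2 c p := by
      apply setIntegral_congr_fun measurable_Qdom
      intro p _
      try dsimp only
      rw [pd_symm hc1C p]
    have h2 : ∫ p in Qdom, pd2 (pd1 c) p * pd1 (pd2 c) p = M2 := by
      rw [hM2]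
      apply setIntegral_congr_fun measurable_Qdom
      intro p _
      try dsimp only
      rw [pd_symm hcC p]
      ring
    rw [h1, h2] at stepB
    linarith
  -- D = ∫ (lap c)^2 and D ≥ 4T
  have hD : ∫ p in Qdom, (dev p)^2 = ∫ p in Qdom, (lap2 c p)^2 := by
    apply setIntegral_congr_fun measurable_Qdom
    intro p hp
    have heq := hceq p (Qdom_subset_Strip hp)
    try dsimp only
    rw [← heq]
    ring
  have hexp : ∫ p in Qdom, (lap2 c p)^2
      = (∫ p in Qdom, ((pd1 (pd1 c) p)^2 + (pd2 (pd2 c) p)^2)) + 2 * T := by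
    have : ∀ p, (lap2 c p)^2 = ((pd1 (pd1 c) p)^2 + (pd2 (pd2 c) p)^2)
        + 2 * (pd1 (pd1 c) p * pd2 (pd2 c) p) := by
      intro p; unfold lap2; ring
    rw [setIntegral_congr_fun measurable_Qdom (fun p _ => this p)]
    rw [MeasureTheory.integral_add (integrableOn_Qdom (by fun_prop))
      (integrableOn_Qdom (by fun_prop))]
    rw [MeasureTheory.integral_const_mul]
  have hAB : 2 * T ≤ ∫ p in Qdom, ((pd1 (pd1 c) p)^2 + (pd2 (pd2 c) p)^2) := by
    rw [hT, ← MeasureTheory.integral_const_mul]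
    apply setIntegral_mono_on (integrableOn_Qdom (by fun_prop))
      (integrableOn_Qdom (by fun_prop)) measurable_Qdom
    intro p _
    nlinarith [sq_nonneg (pd1 (pd1 c) p - pd2 (pd2 c) p)]
  have hM2nonneg : 0 ≤ M2 := setIntegral_nonneg measurable_Qdom (fun p _ => sq_nonneg _)
  have hfin : 4 * T ≤ ∫ p in Qdom, (lap2 c p)^2 := by linarith [hexp, hAB]
  rw [hD]
  linarith [hTM ▸ hfin]

end elliptic

end KS
namespace KS

open MeasureTheory Real Set intervalIntegral

set_option maxHeartbeats 2000000

section mainest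

variable {f c : ℝ × ℝ → ℝ} {m : ℝ}

/-- 1D Cauchy-Schwarz: L¹ norm on interval controlled by L² norm -/
lemma l1_le_l2_Icc {F : ℝ → ℝ} (hF : Continuous F) (a b : ℝ) (hab : a ≤ b) :
    ∫ u in Icc a b, |F u| ≤ Real.sqrt (b - a) * Real.sqrt (∫ u in Icc a b, (F u)^2) := by
  have h1 : ∫ u in Icc a b, |F u| = ∫ u in Icc a b, |F u * 1| := by
    apply setIntegral_congr_fun measurableSet_Icc
    intro u _
    simp
  rw [h1]
  have h2 := cs_abs (volume.restrict (Icc a b)) F (fun _ => 1)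
    ((integrableOn_Icc_1d hF a b).abs.congr (by
      filter_upwards with u
      simp [abs_mul]))
    (integrableOn_Icc_1d (by fun_prop) a b)
    (by simpa using integrableOn_const (C := (1:ℝ)) (ne_of_lt (by
      rw [Real.volume_Icc]; exact ENNReal.ofReal_lt_top)))
  have h3 : ∫ u in Icc a b, ((fun _ => (1:ℝ)) u)^2 = b - a := by
    simp only [one_pow]
    rw [MeasureTheory.setIntegral_const, measureReal_def, Real.volume_Icc,
      ENNReal.toReal_ofReal (by linarith), smul_eq_mul, mul_one]
  calc ∫ u in Icc a b, |F u * 1| ≤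
      Real.sqrt (∫ u in Icc a b, (F u)^2) * Real.sqrt (∫ u in Icc a b, ((fun _ => (1:ℝ)) u)^2) := h2
    _ = Real.sqrt (b - a) * Real.sqrt (∫ u in Icc a b, (F u)^2) := by rw [h3, mul_comm]

/-- 2D Cauchy–Schwarz with a factor 2, on Qdom -/
lemma cs2_Qdom {h k : ℝ × ℝ → ℝ} (hh : Continuous h) (hk : Continuous k) :
    ∫ p in Qdom, |2 * h p * k p| ≤
      2 * Real.sqrt (∫ p in Qdom, (h p)^2) * Real.sqrt (∫ p in Qdom, (k p)^2) := by
  have h1 : ∫ p in Qdom, |2 * h p * k p| = 2 * ∫ p in Qdom, |h p * k p| := by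
    rw [← MeasureTheory.integral_const_mul]
    apply setIntegral_congr_fun measurable_Qdom
    intro p _
    dsimp only
    rw [show (2:ℝ) * h p * k p = 2 * (h p * k p) by ring, abs_mul]
    simp
  rw [h1]
  have h2 := cs_abs (volume.restrict Qdom) h k
    (integrableOn_Qdom (hh.mul hk).abs) (integrableOn_Qdom (hh.pow 2))
    (integrableOn_Qdom (hk.pow 2))
  linarith [h2]

lemma pi_sq_le_ten : π^2 ≤ 10 := by
  have h1 : π < 3.15 := by
    have := Real.pi_lt_d2
    linarith
  have h2 : 0 < π := Real.pi_pos
  nlinarith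

lemma pi_pow4_le : π^4 ≤ 100 := by
  have h1 := pi_sq_le_ten
  have h2 : 0 ≤ π^2 := sq_nonneg _
  nlinarith

lemma sum_sq_le (x y : ℝ) : (x + y)^2 ≤ 2*x^2 + 2*y^2 := by
  nlinarith [sq_nonneg (x - y)]

/-- Main pointwise-in-time estimate -/
lemma main_pointwise (hfC : Continuous f) (hfpos : ∀ p ∈ Strip, 0 ≤ f p)
    (hmean : meanQ f = m) (hm : 0 ≤ m)
    (hc : IsInvNeumann c (fun p => f p - m))
    (hDm : m^2 ≤ ∫ p in Qdom, (f p - m)^2) :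
    (∫ p in Qdom, f p * pd2 c p)^6 ≤ 10^17 * m^4 * (∫ p in Qdom, (f p - m)^2)^4 := by
  obtain ⟨hcC, hcper, hceq, hcbc, hcmean⟩ := hc
  have hπ : (0:ℝ) < π := Real.pi_pos
  have hπlt : π < 3.15 := by
    have := Real.pi_lt_d2
    linarith
  have hπ2 : π^2 ≤ 10 := pi_sq_le_ten
  have hπ4 : π^4 ≤ 100 := pi_pow4_le
  have hcd : Differentiable ℝ c := hcC.differentiable (by simp)
  have hc1C : ContDiff ℝ (⊤:ℕ∞) (pd1 c) := contDiff_pd1 hcC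
  have hc2C : ContDiff ℝ (⊤:ℕ∞) (pd2 c) := contDiff_pd2 hcC
  have hcc : Continuous c := hcC.continuous
  have hc1 : Continuous (pd1 c) := hc1C.continuous
  have hc2 : Continuous (pd2 c) := hc2C.continuous
  have hc12 : Continuous (pd1 (pd2 c)) := cont_pd1 hc2C
  have hc21 : Continuous (pd2 (pd1 c)) := cont_pd2 hc1C
  set D := ∫ p in Qdom, (f p - m)^2 with hD
  set G1 := ∫ p in Qdom, (pd1 c p)^2 with hG1
  set G2 := ∫ p in Qdom, (pd2 c p)^2 with hG2
  set M2 := ∫ p in Qdom, (pd1 (pd2 c) p)^2 with hM2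
  have hD0 : 0 ≤ D := setIntegral_nonneg measurable_Qdom (fun p _ => sq_nonneg _)
  have hG10 : 0 ≤ G1 := setIntegral_nonneg measurable_Qdom (fun p _ => sq_nonneg _)
  have hG20 : 0 ≤ G2 := setIntegral_nonneg measurable_Qdom (fun p _ => sq_nonneg _)
  have hM20 : 0 ≤ M2 := setIntegral_nonneg measurable_Qdom (fun p _ => sq_nonneg _)
  set G := G1 + G2 with hG
  have hG0 : 0 ≤ G := by positivity
  set E := Real.sqrt D with hE
  set SG := Real.sqrt G with hSG
  have hE0 : 0 ≤ E := Real.sqrt_nonneg _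
  have hSG0 : 0 ≤ SG := Real.sqrt_nonneg _
  have hE2 : E^2 = D := Real.sq_sqrt hD0
  have hSG2 : SG^2 = G := Real.sq_sqrt hG0
  -- Green identity
  have hgreen : G = ∫ p in Qdom, (f p - m) * c p :=
    green hcC hcper hceq hcbc
  -- mixed bound
  have hmix : M2 ≤ D / 4 := mixed_bound hcC hcper hceq hcbc
  have hM2E : Real.sqrt M2 ≤ E / 2 := by
    have h1 : Real.sqrt M2 ≤ Real.sqrt (D/4) := Real.sqrt_le_sqrt hmix
    have h2 : Real.sqrt (D/4) = E/2 := by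
      rw [show D/4 = (E/2)^2 by rw [div_pow]; rw [hE2]; norm_num]
      exact Real.sqrt_sq (by positivity)
    linarith [h1, h2]
  -- slice bounds
  have hsymm_int : ∫ p in Qdom, (pd2 (pd1 c) p)^2 = M2 := by
    rw [hM2]
    apply setIntegral_congr_fun measurable_Qdom
    intro p _
    dsimp only
    rw [pd_symm hcC p]
  set RS : ℝ := (1/π) * G + SG * E with hRS
  have hRS0 : 0 ≤ RS := by positivity
  have slice1 : ∀ y ∈ Icc (0:ℝ) π,
      ∫ x in Icc (-π) π, (pd1 c (x, y))^2 ≤ RS := by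
    intro y hy
    have h1 : ∫ x in Icc (-π) π, (pd1 c (x, y))^2 = ∫ x in Ioc (-π) π, (pd1 c (x, y))^2 :=
      MeasureTheory.integral_Icc_eq_integral_Ioc
    have h2 := slice_x2 hc1C hy
    have h3 : ∫ p in Qdom, |2 * pd1 c p * pd2 (pd1 c) p| ≤ 2 * Real.sqrt G1 * Real.sqrt M2 := by
      have := cs2_Qdom hc1 hc21
      rw [hsymm_int] at this
      exact this
    have h4 : 2 * Real.sqrt G1 * Real.sqrt M2 ≤ SG * E := by
      have hsg1 : Real.sqrt G1 ≤ SG := Real.sqrt_le_sqrt (by linarith)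
      have hmm := mul_le_mul hsg1 hM2E (Real.sqrt_nonneg _) hSG0
      calc 2 * Real.sqrt G1 * Real.sqrt M2 = 2 * (Real.sqrt G1 * Real.sqrt M2) := by ring
        _ ≤ 2 * (SG * (E/2)) := by linarith
        _ = SG * E := by ring
    have h5 : (1/π) * G1 ≤ (1/π) * G := by
      apply mul_le_mul_of_nonneg_left (by linarith) (by positivity)
    rw [h1]
    calc ∫ x in Ioc (-π) π, (pd1 c (x, y))^2
        ≤ (1/π) * G1 + ∫ p in Qdom, |2 * pd1 c p * pd2 (pd1 c) p| := h2
      _ ≤ (1/π) * G + SG * E := by linarith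
  have slice2 : ∀ x ∈ Icc (-π) π,
      ∫ y in Icc (0:ℝ) π, (pd2 c (x, y))^2 ≤ RS := by
    intro x hx
    have h2 := slice_x1 hc2C hx
    have h3 : ∫ p in Qdom, |2 * pd2 c p * pd1 (pd2 c) p| ≤ 2 * Real.sqrt G2 * Real.sqrt M2 :=
      cs2_Qdom hc2 hc12
    have h4 : 2 * Real.sqrt G2 * Real.sqrt M2 ≤ SG * E := by
      have hsg2 : Real.sqrt G2 ≤ SG := Real.sqrt_le_sqrt (by linarith)
      have hmm := mul_le_mul hsg2 hM2E (Real.sqrt_nonneg _) hSG0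
      calc 2 * Real.sqrt G2 * Real.sqrt M2 = 2 * (Real.sqrt G2 * Real.sqrt M2) := by ring
        _ ≤ 2 * (SG * (E/2)) := by linarith
        _ = SG * E := by ring
    have h5 : (1/(2*π)) * G2 ≤ (1/π) * G := by
      have hle : (1/(2*π)) ≤ (1/π) := by
        rw [div_le_div_iff₀ (by positivity) (by positivity)]
        linarith
      calc (1/(2*π)) * G2 ≤ (1/π) * G2 := mul_le_mul_of_nonneg_right hle hG20
        _ ≤ (1/π) * G := mul_le_mul_of_nonneg_left (by linarith) (by positivity)
    calc ∫ y in Icc (0:ℝ) π, (pd2 c (x, y))^2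
        ≤ (1/(2*π)) * G2 + ∫ p in Qdom, |2 * pd2 c p * pd1 (pd2 c) p| := h2
      _ ≤ (1/π) * G + SG * E := by linarith
  -- oscillation bound
  set Δ : ℝ := Real.sqrt (2*π) * Real.sqrt RS + Real.sqrt π * Real.sqrt RS with hΔ
  have hΔ0 : 0 ≤ Δ := by positivity
  have osc : ∀ p ∈ QC, ∀ q ∈ QC, c p - c q ≤ Δ := by
    rintro ⟨p₁, p₂⟩ ⟨hp₁, hp₂⟩ ⟨q₁, q₂⟩ ⟨hq₁, hq₂⟩
    have hhoriz : c (p₁, p₂) - c (q₁, p₂) ≤ Real.sqrt (2*π) * Real.sqrt RS := by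
      have hderiv : ∀ u : ℝ, HasDerivAt (fun u => c (u, p₂)) (pd1 c (u, p₂)) u :=
        fun u => hasDerivAt_slice1 (hcd _)
      have hftc : c (p₁, p₂) - c (q₁, p₂) = ∫ u in q₁..p₁, pd1 c (u, p₂) := by
        rw [← intervalIntegral.integral_deriv_eq_sub
          (f := fun u => c (u, p₂)) (fun u _ => (hderiv u).differentiableAt) ?_]
        · apply intervalIntegral.integral_congr
          intro u _
          show deriv (fun u => c (u, p₂)) u = pd1 c (u, p₂)
          exact (hderiv u).deriv
        · have : deriv (fun u => c (u, p₂)) = fun u => pd1 c (u, p₂) :=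
            funext fun u => (hderiv u).deriv
          rw [this]
          exact (hc1.comp (by fun_prop)).continuousOn.intervalIntegrable
      have habs : |∫ u in q₁..p₁, pd1 c (u, p₂)| ≤
          ∫ u in Icc (-π) π, |pd1 c (u, p₂)| :=
        abs_intervalIntegral_le (hc1.comp (by fun_prop)) hq₁ hp₁
      have hl2 : ∫ u in Icc (-π) π, |pd1 c (u, p₂)| ≤
          Real.sqrt (π - -π) * Real.sqrt (∫ u in Icc (-π) π, (pd1 c (u, p₂))^2) :=
        l1_le_l2_Icc (hc1.comp (by fun_prop)) _ _ (by linarith)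
      have hs : Real.sqrt (∫ u in Icc (-π) π, (pd1 c (u, p₂))^2) ≤ Real.sqrt RS :=
        Real.sqrt_le_sqrt (slice1 p₂ hp₂)
      have h2π : Real.sqrt (π - -π) = Real.sqrt (2*π) := by
        congr 1
        ring
      calc c (p₁, p₂) - c (q₁, p₂) ≤ |∫ u in q₁..p₁, pd1 c (u, p₂)| := by
            rw [← hftc] at *
            exact le_abs_self _
        _ ≤ Real.sqrt (π - -π) * Real.sqrt (∫ u in Icc (-π) π, (pd1 c (u, p₂))^2) :=
            le_trans habs hl2
        _ ≤ Real.sqrt (2*π) * Real.sqrt RS := by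
            rw [h2π]
            exact mul_le_mul_of_nonneg_left hs (Real.sqrt_nonneg _)
    have hvert : c (q₁, p₂) - c (q₁, q₂) ≤ Real.sqrt π * Real.sqrt RS := by
      have hderiv : ∀ v : ℝ, HasDerivAt (fun v => c (q₁, v)) (pd2 c (q₁, v)) v :=
        fun v => hasDerivAt_slice2 (hcd _)
      have hftc : c (q₁, p₂) - c (q₁, q₂) = ∫ v in q₂..p₂, pd2 c (q₁, v) := by
        rw [← intervalIntegral.integral_deriv_eq_sub
          (f := fun v => c (q₁, v)) (fun v _ => (hderiv v).differentiableAt) ?_]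
        · apply intervalIntegral.integral_congr
          intro v _
          show deriv (fun v => c (q₁, v)) v = pd2 c (q₁, v)
          exact (hderiv v).deriv
        · have : deriv (fun v => c (q₁, v)) = fun v => pd2 c (q₁, v) :=
            funext fun v => (hderiv v).deriv
          rw [this]
          exact (hc2.comp (by fun_prop)).continuousOn.intervalIntegrable
      have habs : |∫ v in q₂..p₂, pd2 c (q₁, v)| ≤
          ∫ v in Icc (0:ℝ) π, |pd2 c (q₁, v)| :=
        abs_intervalIntegral_le (hc2.comp (by fun_prop)) hq₂ hp₂
      have hl2 : ∫ v in Icc (0:ℝ) π, |pd2 c (q₁, v)| ≤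
          Real.sqrt (π - 0) * Real.sqrt (∫ v in Icc (0:ℝ) π, (pd2 c (q₁, v))^2) :=
        l1_le_l2_Icc (hc2.comp (by fun_prop)) _ _ (by linarith)
      have hs : Real.sqrt (∫ v in Icc (0:ℝ) π, (pd2 c (q₁, v))^2) ≤ Real.sqrt RS :=
        Real.sqrt_le_sqrt (slice2 q₁ hq₁)
      calc c (q₁, p₂) - c (q₁, q₂) ≤ |∫ v in q₂..p₂, pd2 c (q₁, v)| := by
            rw [← hftc] at *
            exact le_abs_self _
        _ ≤ Real.sqrt (π - 0) * Real.sqrt (∫ v in Icc (0:ℝ) π, (pd2 c (q₁, v))^2) :=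
            le_trans habs hl2
        _ ≤ Real.sqrt π * Real.sqrt RS := by
            rw [show π - 0 = π by ring]
            exact mul_le_mul_of_nonneg_left hs (Real.sqrt_nonneg _)
    linarith
  -- sign points and sup bound
  have hintc : ∫ p in Qdom, c p = 0 := by
    have := hcmean
    unfold meanQ at this
    have hne : (1 / (2 * π ^ 2)) ≠ 0 := by positivity
    rcases mul_eq_zero.mp this with h | h
    · exact absurd h hne
    · exact h
  have hQCne : QC.Nonempty := by
    refine ⟨(0,0), ⟨⟨?_, ?_⟩, ⟨?_, ?_⟩⟩⟩ <;> simp <;> linarith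
  obtain ⟨q₀, hq₀QC, hq₀min⟩ := isCompact_QC.exists_isMinOn hQCne hcc.continuousOn
  obtain ⟨q₁, hq₁QC, hq₁max⟩ := isCompact_QC.exists_isMaxOn hQCne hcc.continuousOn
  have hq₀le : c q₀ ≤ 0 := by
    by_contra hpos
    push_neg at hpos
    have : ∫ p in Qdom, c q₀ ≤ ∫ p in Qdom, c p := by
      apply setIntegral_mono_on
      · exact integrableOn_const (ne_of_lt volume_Qdom_lt_top)
      · exact integrableOn_Qdom hcc
      · exact measurable_Qdom
      · intro p hp
        exact hq₀min (Qdom_subset_QC hp)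
    rw [MeasureTheory.setIntegral_const, measureReal_def, volume_Qdom_toReal, smul_eq_mul, hintc] at this
    have hc0 := mul_pos (show (0:ℝ) < 2*π^2 by positivity) hpos
    linarith
  have hq₁ge : 0 ≤ c q₁ := by
    by_contra hneg
    push_neg at hneg
    have : ∫ p in Qdom, c p ≤ ∫ p in Qdom, c q₁ := by
      apply setIntegral_mono_on
      · exact integrableOn_Qdom hcc
      · exact integrableOn_const (ne_of_lt volume_Qdom_lt_top)
      · exact measurable_Qdom
      · intro p hp
        exact hq₁max (Qdom_subset_QC hp)
    rw [MeasureTheory.setIntegral_const, measureReal_def, volume_Qdom_toReal, smul_eq_mul, hintc] at this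
    have hc0 := mul_neg_of_pos_of_neg (show (0:ℝ) < 2*π^2 by positivity) hneg
    linarith
  have hsup : ∀ p ∈ Qdom, |c p| ≤ Δ := by
    intro p hp
    have hpQC := Qdom_subset_QC hp
    rw [abs_le]
    constructor
    · have := osc q₁ hq₁QC p hpQC
      linarith
    · have := osc p hpQC q₀ hq₀QC
      linarith
  -- mass-type facts
  have hintf : ∫ p in Qdom, f p = 2*π^2*m := by
    have : meanQ f = m := hmean
    unfold meanQ at this
    have h2π2 : (2*π^2) ≠ 0 := by positivity
    field_simp at this
    linarith
  have hdevL1 : ∫ p in Qdom, |f p - m| ≤ 4*π^2*m := by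
    have hb : ∀ p ∈ Qdom, |f p - m| ≤ f p + m := by
      intro p hp
      have h0 := hfpos p (Qdom_subset_Strip hp)
      rw [abs_le]
      constructor <;> [linarith; linarith]
    calc ∫ p in Qdom, |f p - m| ≤ ∫ p in Qdom, (f p + m) := by
          apply setIntegral_mono_on
          · exact (integrableOn_Qdom (hfC.sub continuous_const)).abs
          · exact (integrableOn_Qdom hfC).add (integrableOn_const (ne_of_lt volume_Qdom_lt_top))
          · exact measurable_Qdom
          · exact hb
      _ = (∫ p in Qdom, f p) + ∫ p in Qdom, (m:ℝ) := MeasureTheory.integral_add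
          (integrableOn_Qdom hfC) (integrableOn_const (ne_of_lt volume_Qdom_lt_top))
      _ = 2*π^2*m + 2*π^2*m := by
          rw [hintf, MeasureTheory.setIntegral_const, measureReal_def, volume_Qdom_toReal, smul_eq_mul]
      _ = 4*π^2*m := by ring
  -- key chain : G ≤ 4π² m Δ
  have hGineq : G ≤ 4*π^2*m*Δ := by
    rw [hgreen]
    calc ∫ p in Qdom, (f p - m) * c p ≤ ∫ p in Qdom, |f p - m| * Δ := by
          apply setIntegral_mono_on
          · exact integrableOn_Qdom ((hfC.sub continuous_const).mul hcc)
          · exact (integrableOn_Qdom (hfC.sub continuous_const)).abs.mul_const _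
          · exact measurable_Qdom
          · intro p hp
            have h1 := hsup p hp
            have h2 : (f p - m) * c p ≤ |f p - m| * |c p| := by
              calc (f p - m) * c p ≤ |(f p - m) * c p| := le_abs_self _
                _ = |f p - m| * |c p| := abs_mul _ _
            calc (f p - m) * c p ≤ |f p - m| * |c p| := h2
              _ ≤ |f p - m| * Δ := mul_le_mul_of_nonneg_left h1 (abs_nonneg _)
      _ = (∫ p in Qdom, |f p - m|) * Δ := MeasureTheory.integral_mul_const _ _
      _ ≤ (4*π^2*m) * Δ := mul_le_mul_of_nonneg_right hdevL1 hΔ0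
  -- final Cauchy-Schwarz (semantic part, before clearing values)
  have hf2 : ∫ p in Qdom, (f p)^2 = D + 2*π^2*m^2 := by
    have hptw : ∀ p, (f p)^2 = (f p - m)^2 + 2*m*(f p) - m^2 := by intro p; ring
    rw [setIntegral_congr_fun measurable_Qdom (fun p _ => hptw p)]
    rw [MeasureTheory.integral_sub, MeasureTheory.integral_add]
    · rw [MeasureTheory.integral_const_mul, hintf, MeasureTheory.setIntegral_const, measureReal_def,
        volume_Qdom_toReal, smul_eq_mul]
      rw [hD]
      ring
    · exact integrableOn_Qdom ((hfC.sub continuous_const).pow 2)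
    · exact (integrableOn_Qdom hfC).const_mul _
    · exact ((integrableOn_Qdom ((hfC.sub continuous_const).pow 2)).add
        ((integrableOn_Qdom hfC).const_mul _))
    · exact integrableOn_const (ne_of_lt volume_Qdom_lt_top)
  set F := ∫ p in Qdom, f p * pd2 c p with hF
  have hFsq : F^2 ≤ (D + 2*π^2*m^2) * G := by
    have h1 := cs (volume.restrict Qdom) f (pd2 c)
      (integrableOn_Qdom (hfC.mul hc2)) (integrableOn_Qdom (hfC.pow 2))
      (integrableOn_Qdom (hc2.pow 2))
    rw [hf2] at h1
    have h2 : (D + 2*π^2*m^2) * G2 ≤ (D + 2*π^2*m^2) * G := by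
      apply mul_le_mul_of_nonneg_left (by linarith) (by positivity)
    exact le_trans h1 h2
  -- numeric phase on opaque variables
  clear_value D G1 G2 M2 G E SG RS Δ F
  have hΔsq : Δ^2 ≤ 6*G + 19*SG*E := by
    have hsq1 : (Real.sqrt (2*π))^2 = 2*π := Real.sq_sqrt (by linarith)
    have hsq2 : (Real.sqrt π)^2 = π := Real.sq_sqrt (by linarith)
    have hsqRS : (Real.sqrt RS)^2 = RS := Real.sq_sqrt hRS0
    have hexp : Δ^2 ≤ 2*(2*π*RS) + 2*(π*RS) := by
      rw [hΔ]
      have e1 : (Real.sqrt (2*π) * Real.sqrt RS)^2 = 2*π*RS := by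
        rw [mul_pow, hsq1, hsqRS]
      have e2 : (Real.sqrt π * Real.sqrt RS)^2 = π*RS := by
        rw [mul_pow, hsq2, hsqRS]
      have := sum_sq_le (Real.sqrt (2*π) * Real.sqrt RS) (Real.sqrt π * Real.sqrt RS)
      linarith [e1 ▸ e2 ▸ this]
    have heq : 2*(2*π*RS) + 2*(π*RS) = 6*π*RS := by ring
    rw [heq] at hexp
    have hRSval : 6*π*RS = 6*G + 6*π*(SG*E) := by
      rw [hRS]
      field_simp
    have hSGE : 0 ≤ SG*E := mul_nonneg hSG0 hE0
    have h6π : 6*π*(SG*E) ≤ 19*(SG*E) := by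
      apply mul_le_mul_of_nonneg_right _ hSGE
      linarith
    calc Δ^2 ≤ 6*π*RS := hexp
      _ = 6*G + 6*π*(SG*E) := hRSval
      _ ≤ 6*G + 19*(SG*E) := by linarith
      _ = 6*G + 19*SG*E := by ring
  have hGsq : G^2 ≤ 1600*m^2*(6*G + 19*SG*E) := by
    have h1 : G^2 ≤ (4*π^2*m*Δ)^2 := by
      have := pow_le_pow_left₀ hG0 hGineq 2
      exact this
    have h2 : (4*π^2*m*Δ)^2 = (16*π^4)*(m^2*Δ^2) := by ring
    have h3 : (16*π^4)*(m^2*Δ^2) ≤ 1600*(m^2*Δ^2) := by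
      apply mul_le_mul_of_nonneg_right _ (mul_nonneg (sq_nonneg m) (sq_nonneg Δ))
      linarith
    have h4 : m^2*Δ^2 ≤ m^2*(6*G + 19*SG*E) :=
      mul_le_mul_of_nonneg_left hΔsq (sq_nonneg m)
    calc G^2 ≤ (4*π^2*m*Δ)^2 := h1
      _ = (16*π^4)*(m^2*Δ^2) := h2
      _ ≤ 1600*(m^2*Δ^2) := h3
      _ ≤ 1600*(m^2*(6*G + 19*SG*E)) := by
          apply mul_le_mul_of_nonneg_left h4 (by norm_num)
      _ = 1600*m^2*(6*G + 19*SG*E) := by ring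
  -- case analysis giving G³ bound
  have hm4D : (0:ℝ) ≤ m^4*D := mul_nonneg (pow_nonneg hm 4) hD0
  have hGcube : G^3 ≤ (19200^3 + 60800^2) * (m^4 * D) := by
    have hGSG : G = SG^2 := hSG2.symm
    by_cases hcase : SG^3 ≤ 60800*(m^2*E)
    · -- G³ ≤ 60800² m⁴ D
      have hSG3 : (0:ℝ) ≤ SG^3 := pow_nonneg hSG0 3
      have h2 : (SG^3)^2 ≤ (60800*(m^2*E))^2 := pow_le_pow_left₀ hSG3 hcase 2
      have h1 : G^3 = (SG^3)^2 := by rw [hGSG]; ring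
      have h3 : (60800*(m^2*E))^2 = 60800^2*(m^4*D) := by
        rw [show (60800*(m^2*E))^2 = 60800^2*(m^4*E^2) by ring, hE2]
      have h4 : (60800:ℝ)^2*(m^4*D) ≤ (19200^3 + 60800^2)*(m^4*D) := by
        apply mul_le_mul_of_nonneg_right _ hm4D
        norm_num
      calc G^3 = (SG^3)^2 := h1
        _ ≤ (60800*(m^2*E))^2 := h2
        _ = 60800^2*(m^4*D) := h3
        _ ≤ (19200^3 + 60800^2)*(m^4*D) := h4
    · push_neg at hcase
      have hstep : 60800*(m^2*E)*SG ≤ SG^3*SG :=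
        mul_le_mul_of_nonneg_right (le_of_lt hcase) hSG0
      have hGG : SG^4 = G^2 := by rw [hGSG]; ring
      have h1 : 30400*m^2*(SG*E) ≤ G^2/2 := by linarith [hstep, hGG]
      have h3 : G^2 ≤ 9600*m^2*G + G^2/2 := by linarith [hGsq, h1]
      have h5 : G ≤ 19200*m^2 := by
        rcases eq_or_lt_of_le hG0 with hz | hz
        · rw [← hz]
          positivity
        · have h3' : G*G ≤ G*(19200*m^2) := by linarith [h3]
          exact le_of_mul_le_mul_left h3' hz
      have h6 : G^3 ≤ (19200*m^2)^3 := pow_le_pow_left₀ hG0 h5 3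
      have h7 : (19200*m^2)^3 = 19200^3*(m^4*m^2) := by ring
      have h8 : (19200:ℝ)^3*(m^4*m^2) ≤ 19200^3*(m^4*D) := by
        apply mul_le_mul_of_nonneg_left _ (by norm_num)
        exact mul_le_mul_of_nonneg_left hDm (pow_nonneg hm 4)
      have h9 : (19200:ℝ)^3*(m^4*D) ≤ (19200^3 + 60800^2)*(m^4*D) := by
        apply mul_le_mul_of_nonneg_right _ hm4D
        norm_num
      calc G^3 ≤ (19200*m^2)^3 := h6
        _ = 19200^3*(m^4*m^2) := h7
        _ ≤ 19200^3*(m^4*D) := h8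
        _ ≤ (19200^3 + 60800^2)*(m^4*D) := h9
  have hf2le : D + 2*π^2*m^2 ≤ 21*D := by
    have h1 : 2*π^2*m^2 ≤ 20*m^2 := by
      apply mul_le_mul_of_nonneg_right _ (sq_nonneg m)
      linarith
    linarith [hDm]
  have hFsq' : F^2 ≤ 21*D*G := by
    calc F^2 ≤ (D + 2*π^2*m^2) * G := hFsq
      _ ≤ 21*D*G := mul_le_mul_of_nonneg_right hf2le hG0
  calc F^6 = (F^2)^3 := by ring
    _ ≤ (21*D*G)^3 := by
        apply pow_le_pow_left₀ (sq_nonneg F) hFsq'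
    _ = 9261*D^3*G^3 := by ring
    _ ≤ 9261*D^3*((19200^3 + 60800^2) * (m^4 * D)) := by
        apply mul_le_mul_of_nonneg_left hGcube
          (mul_nonneg (by norm_num) (pow_nonneg hD0 3))
    _ = (9261*(19200^3 + 60800^2))*(m^4*D^4) := by ring
    _ ≤ (10^17)*(m^4*D^4) := by
        apply mul_le_mul_of_nonneg_right _ (mul_nonneg (pow_nonneg hm 4) (pow_nonneg hD0 4))
        norm_num
    _ = 10^17 * m^4 * D^4 := by ring

end mainest

end KS
namespace KS

open MeasureTheory Real Set intervalIntegral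

lemma QC_subset_Strip : QC ⊆ Strip := by
  rintro ⟨x, y⟩ ⟨hx, hy⟩
  exact ⟨trivial, hy⟩

lemma pd1_const_mul {h : ℝ × ℝ → ℝ} (hh : Differentiable ℝ h) (a : ℝ) (p : ℝ × ℝ) :
    pd1 (fun q => a * h q) p = a * pd1 h p := by
  unfold pd1
  rw [fderiv_const_mul (hh p)]
  simp

lemma pd2_const_mul {h : ℝ × ℝ → ℝ} (hh : Differentiable ℝ h) (a : ℝ) (p : ℝ × ℝ) :
    pd2 (fun q => a * h q) p = a * pd2 h p := by
  unfold pd2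
  rw [fderiv_const_mul (hh p)]
  simp

section mass

variable {T gbuoy : ℝ} {ρ cc ψ : ℝ → ℝ × ℝ → ℝ}

lemma Ico_inter_Ioi_eq (hT : 0 < T) : Ico (0:ℝ) T ∩ Ioi 0 = Ioo 0 T := by
  ext x
  simp only [mem_inter_iff, mem_Ico, mem_Ioi, mem_Ioo]
  constructor
  · rintro ⟨⟨_, h2⟩, h3⟩
    exact ⟨h3, h2⟩
  · rintro ⟨h1, h2⟩
    exact ⟨⟨le_of_lt h1, h2⟩, h1⟩

/-- the space-integral of the time-derivative vanishes (divergence structure). -/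
lemma div_int_zero (hsol : IsRegSol gbuoy (Ico 0 T) ρ cc ψ) (hT : 0 < T)
    {s : ℝ} (hs : s ∈ Ioo 0 T) :
    ∫ p in Qdom, (lap2 (ρ s) p + gbuoy * pd2 (ψ s) p * pd1 (ρ s) p
      - gbuoy * pd1 (ψ s) p * pd2 (ρ s) p
      - (pd1 (fun q => ρ s q * pd1 (cc s) q) p + pd2 (fun q => ρ s q * pd2 (cc s) q) p)) = 0 := by
  have hsI : s ∈ Ico 0 T ∩ Ioi 0 := by
    rw [Ico_inter_Ioi_eq hT]; exact hs
  have hsI' : s ∈ Ico (0:ℝ) T := hsI.1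
  have hρC : ContDiff ℝ (⊤:ℕ∞) (ρ s) := hsol.smooth_space s hsI
  have hρd : Differentiable ℝ (ρ s) := hρC.differentiable (by simp)
  have hρper : Periodic2 (ρ s) := hsol.periodic s hsI'
  obtain ⟨hcC, hcper, hceq, hcbc, hcmean⟩ := hsol.chem s hsI
  obtain ⟨hψC, hψper, hψeq, hψbc⟩ := hsol.stream s hsI
  have hbc := hsol.bc s hsI
  have hcd : Differentiable ℝ (cc s) := hcC.differentiable (by simp)
  have hψd : Differentiable ℝ (ψ s) := hψC.differentiable (by simp)
  have hρ1C := contDiff_pd1 hρC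
  have hρ2C := contDiff_pd2 hρC
  have hψ1C := contDiff_pd1 hψC
  have hψ2C := contDiff_pd2 hψC
  have hc1C := contDiff_pd1 hcC
  have hc2C := contDiff_pd2 hcC
  have hρ1 := hρ1C.continuous
  have hρ2 := hρ2C.continuous
  have hψ1 := hψ1C.continuous
  have hψ2 := hψ2C.continuous
  have hc1 := hc1C.continuous
  have hc2 := hc2C.continuous
  have hρc : Continuous (ρ s) := hρC.continuous
  have hψc : Continuous (ψ s) := hψC.continuous
  -- Laplacian term
  have hlap : ∫ p in Qdom, lap2 (ρ s) p = 0 := by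
    have hsplit : ∫ p in Qdom, lap2 (ρ s) p
        = (∫ p in Qdom, pd1 (pd1 (ρ s)) p) + ∫ p in Qdom, pd2 (pd2 (ρ s)) p := by
      rw [← MeasureTheory.integral_add (integrableOn_Qdom (cont_pd1 hρ1C))
        (integrableOn_Qdom (cont_pd2 hρ2C))]
      rfl
    rw [hsplit]
    rw [integral_pd1_periodic hρ1C (periodic2_pd1 hρd hρper)]
    rw [integral_pd2_boundary hρ2C (fun x => ⟨(hbc x).1, (hbc x).2⟩)]
    ring
  -- transport terms
  have htrans : ∫ p in Qdom, (gbuoy * pd2 (ψ s) p * pd1 (ρ s) p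
      - gbuoy * pd1 (ψ s) p * pd2 (ρ s) p) = 0 := by
    have hw1 : ContDiff ℝ (⊤:ℕ∞) (fun q => gbuoy * pd2 (ψ s) q * ρ s q) := by
      exact (contDiff_const.mul hψ2C).mul hρC
    have hw2 : ContDiff ℝ (⊤:ℕ∞) (fun q => gbuoy * pd1 (ψ s) q * ρ s q) := by
      exact (contDiff_const.mul hψ1C).mul hρC
    have hA : ∫ p in Qdom, pd1 (fun q => gbuoy * pd2 (ψ s) q * ρ s q) p = 0 := by
      apply integral_pd1_periodic hw1
      apply periodic2_mul (periodic2_smul _ (periodic2_pd2 hψd hψper)) hρper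
    have hB : ∫ p in Qdom, pd2 (fun q => gbuoy * pd1 (ψ s) q * ρ s q) p = 0 := by
      apply integral_pd2_boundary hw2
      intro x
      have h0 : pd1 (ψ s) (x, 0) = 0 :=
        pd1_of_const_line hψd (fun u => (hψbc u).1) x
      have hπb : pd1 (ψ s) (x, π) = 0 :=
        pd1_of_const_line hψd (fun u => (hψbc u).2) x
      constructor
      · rw [h0]; ring
      · rw [hπb]; ring
    -- expand the divergences
    have hψ12 : Continuous (pd1 (pd2 (ψ s))) := cont_pd1 hψ2C
    have hψ21 : Continuous (pd2 (pd1 (ψ s))) := cont_pd2 hψ1C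
    have hA' : ∫ p in Qdom, pd1 (fun q => gbuoy * pd2 (ψ s) q * ρ s q) p
        = (∫ p in Qdom, gbuoy * pd1 (pd2 (ψ s)) p * ρ s p)
          + ∫ p in Qdom, gbuoy * pd2 (ψ s) p * pd1 (ρ s) p := by
      rw [← MeasureTheory.integral_add
        (integrableOn_Qdom ((continuous_const.fun_mul hψ12).fun_mul hρc))
        (integrableOn_Qdom ((continuous_const.fun_mul hψ2).fun_mul hρ1))]
      apply setIntegral_congr_fun measurable_Qdom
      intro p _
      dsimp only
      rw [pd1_mul ((differentiable_const _).fun_mul (hψ2C.differentiable (by simp))) hρd,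
        pd1_const_mul (hψ2C.differentiable (by simp))]
      try ring
    have hB' : ∫ p in Qdom, pd2 (fun q => gbuoy * pd1 (ψ s) q * ρ s q) p
        = (∫ p in Qdom, gbuoy * pd2 (pd1 (ψ s)) p * ρ s p)
          + ∫ p in Qdom, gbuoy * pd1 (ψ s) p * pd2 (ρ s) p := by
      rw [← MeasureTheory.integral_add
        (integrableOn_Qdom ((continuous_const.fun_mul hψ21).fun_mul hρc))
        (integrableOn_Qdom ((continuous_const.fun_mul hψ1).fun_mul hρ2))]
      apply setIntegral_congr_fun measurable_Qdom
      intro p _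
      dsimp only
      rw [pd2_mul ((differentiable_const _).fun_mul (hψ1C.differentiable (by simp))) hρd,
        pd2_const_mul (hψ1C.differentiable (by simp))]
      try ring
    have hsymm : ∫ p in Qdom, gbuoy * pd1 (pd2 (ψ s)) p * ρ s p
        = ∫ p in Qdom, gbuoy * pd2 (pd1 (ψ s)) p * ρ s p := by
      apply setIntegral_congr_fun measurable_Qdom
      intro p _
      dsimp only
      rw [pd_symm hψC p]
    have hsplit : ∫ p in Qdom, (gbuoy * pd2 (ψ s) p * pd1 (ρ s) p
        - gbuoy * pd1 (ψ s) p * pd2 (ρ s) p)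
        = (∫ p in Qdom, gbuoy * pd2 (ψ s) p * pd1 (ρ s) p)
          - ∫ p in Qdom, gbuoy * pd1 (ψ s) p * pd2 (ρ s) p :=
      MeasureTheory.integral_sub (integrableOn_Qdom (by fun_prop))
        (integrableOn_Qdom (by fun_prop))
    rw [hsplit]
    have e1 : ∫ p in Qdom, gbuoy * pd2 (ψ s) p * pd1 (ρ s) p
        = - ∫ p in Qdom, gbuoy * pd1 (pd2 (ψ s)) p * ρ s p := by
      rw [hA'] at hA
      linarith
    have e2 : ∫ p in Qdom, gbuoy * pd1 (ψ s) p * pd2 (ρ s) p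
        = - ∫ p in Qdom, gbuoy * pd2 (pd1 (ψ s)) p * ρ s p := by
      rw [hB'] at hB
      linarith
    rw [e1, e2, hsymm]
    ring
  -- chemotaxis terms
  have hchem : ∫ p in Qdom, (pd1 (fun q => ρ s q * pd1 (cc s) q) p
      + pd2 (fun q => ρ s q * pd2 (cc s) q) p) = 0 := by
    have hsplit : ∫ p in Qdom, (pd1 (fun q => ρ s q * pd1 (cc s) q) p
        + pd2 (fun q => ρ s q * pd2 (cc s) q) p)
        = (∫ p in Qdom, pd1 (fun q => ρ s q * pd1 (cc s) q) p)
          + ∫ p in Qdom, pd2 (fun q => ρ s q * pd2 (cc s) q) p :=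
      MeasureTheory.integral_add (integrableOn_Qdom (cont_pd1 (hρC.mul hc1C)))
        (integrableOn_Qdom (cont_pd2 (hρC.mul hc2C)))
    rw [hsplit]
    rw [integral_pd1_periodic (hρC.mul hc1C)
      (periodic2_mul hρper (periodic2_pd1 hcd hcper))]
    rw [integral_pd2_boundary (hρC.mul hc2C) (fun x => by
      constructor
      · rw [(hcbc x).1]; ring
      · rw [(hcbc x).2]; ring)]
    ring
  -- assemble
  have i1 : IntegrableOn (fun p => lap2 (ρ s) p) Qdom := by
    apply integrableOn_Qdom
    exact (cont_pd1 hρ1C).add (cont_pd2 hρ2C)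
  have i2 : IntegrableOn (fun p => gbuoy * pd2 (ψ s) p * pd1 (ρ s) p
      - gbuoy * pd1 (ψ s) p * pd2 (ρ s) p) Qdom := integrableOn_Qdom (by fun_prop)
  have i3 : IntegrableOn (fun p => pd1 (fun q => ρ s q * pd1 (cc s) q) p
      + pd2 (fun q => ρ s q * pd2 (cc s) q) p) Qdom := by
    apply integrableOn_Qdom
    exact (cont_pd1 (hρC.mul hc1C)).add (cont_pd2 (hρC.mul hc2C))
  have i12 : IntegrableOn (fun p => lap2 (ρ s) p + (gbuoy * pd2 (ψ s) p * pd1 (ρ s) p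
      - gbuoy * pd1 (ψ s) p * pd2 (ρ s) p)) Qdom := by
    exact i1.add i2
  have e2 : (∫ p in Qdom, (lap2 (ρ s) p + (gbuoy * pd2 (ψ s) p * pd1 (ρ s) p
        - gbuoy * pd1 (ψ s) p * pd2 (ρ s) p)))
      = (∫ p in Qdom, lap2 (ρ s) p) + ∫ p in Qdom, (gbuoy * pd2 (ψ s) p * pd1 (ρ s) p
        - gbuoy * pd1 (ψ s) p * pd2 (ρ s) p) :=
    MeasureTheory.integral_add i1 i2
  have e3 : (∫ p in Qdom, ((lap2 (ρ s) p + (gbuoy * pd2 (ψ s) p * pd1 (ρ s) p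
        - gbuoy * pd1 (ψ s) p * pd2 (ρ s) p))
        - (pd1 (fun q => ρ s q * pd1 (cc s) q) p + pd2 (fun q => ρ s q * pd2 (cc s) q) p)))
      = (∫ p in Qdom, (lap2 (ρ s) p + (gbuoy * pd2 (ψ s) p * pd1 (ρ s) p
        - gbuoy * pd1 (ψ s) p * pd2 (ρ s) p)))
        - ∫ p in Qdom, (pd1 (fun q => ρ s q * pd1 (cc s) q) p
          + pd2 (fun q => ρ s q * pd2 (cc s) q) p) :=
    MeasureTheory.integral_sub i12 i3
  have e1 : ∫ p in Qdom, (lap2 (ρ s) p + gbuoy * pd2 (ψ s) p * pd1 (ρ s) p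
      - gbuoy * pd1 (ψ s) p * pd2 (ρ s) p
      - (pd1 (fun q => ρ s q * pd1 (cc s) q) p + pd2 (fun q => ρ s q * pd2 (cc s) q) p))
      = ∫ p in Qdom, ((lap2 (ρ s) p + (gbuoy * pd2 (ψ s) p * pd1 (ρ s) p
        - gbuoy * pd1 (ψ s) p * pd2 (ρ s) p))
        - (pd1 (fun q => ρ s q * pd1 (cc s) q) p + pd2 (fun q => ρ s q * pd2 (cc s) q) p)) := by
    apply setIntegral_congr_fun measurable_Qdom
    intro p _
    dsimp only
    ring
  rw [e1, e3, e2, hlap, htrans, hchem]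
  ring

/-- mass conservation -/
lemma mass_conserved (hsol : IsRegSol gbuoy (Ico 0 T) ρ cc ψ) (hT : 0 < T) :
    ∀ t ∈ Ico (0:ℝ) T, ∫ p in Qdom, ρ t p = ∫ p in Qdom, ρ 0 p := by
  -- the uncurried solution and its time derivative
  set Fu : ℝ × (ℝ × ℝ) → ℝ := fun q => ρ q.1 q.2 with hFu
  have hO : IsOpen ((Ioo (0:ℝ) T) ×ˢ (univ : Set (ℝ × ℝ))) := isOpen_Ioo.prod isOpen_univ
  have hFuC : ContDiffOn ℝ (⊤:ℕ∞) Fu ((Ioo (0:ℝ) T) ×ˢ (univ : Set (ℝ × ℝ))) := by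
    have := hsol.smooth
    rwa [Ico_inter_Ioi_eq hT] at this
  set hdf : ℝ × (ℝ × ℝ) → ℝ := fun q => fderiv ℝ Fu q ((1:ℝ), ((0:ℝ), (0:ℝ))) with hhdf
  have hder : ∀ s ∈ Ioo (0:ℝ) T, ∀ p : ℝ × ℝ,
      HasDerivAt (fun σ => ρ σ p) (hdf (s, p)) s := by
    intro s hs p
    have hmem : (s, p) ∈ (Ioo (0:ℝ) T) ×ˢ (univ : Set (ℝ × ℝ)) := ⟨hs, trivial⟩
    have hdiff : DifferentiableAt ℝ Fu (s, p) :=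
      ((hFuC.contDiffAt (hO.mem_nhds hmem)).differentiableAt (by simp))
    have hcurve : HasDerivAt (fun σ : ℝ => (σ, p)) ((1:ℝ), ((0:ℝ), (0:ℝ))) s :=
      (hasDerivAt_id s).prodMk (hasDerivAt_const s p)
    exact hdiff.hasFDerivAt.comp_hasDerivAt s hcurve
  have hdfcont : ContinuousOn hdf ((Ioo (0:ℝ) T) ×ˢ (univ : Set (ℝ × ℝ))) := by
    have h1 : ContinuousOn (fderiv ℝ Fu) ((Ioo (0:ℝ) T) ×ˢ (univ : Set (ℝ × ℝ))) :=
      hFuC.continuousOn_fderiv_of_isOpen hO (by exact_mod_cast le_top)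
    exact ((ContinuousLinearMap.apply ℝ ℝ ((1:ℝ), ((0:ℝ), (0:ℝ)))).continuous.comp_continuousOn h1)
  -- constancy on (0, T)
  have step : ∀ t' t : ℝ, 0 < t' → t' ≤ t → t < T →
      ∫ p in Qdom, ρ t p = ∫ p in Qdom, ρ t' p := by
    intro t' t ht'0 ht't htT
    have ht0 : 0 < t := lt_of_lt_of_le ht'0 ht't
    have hsub : ∀ s, s ∈ uIcc t' t → s ∈ Ioo (0:ℝ) T := by
      intro s hsmem
      rw [uIcc_of_le ht't] at hsmem
      exact ⟨lt_of_lt_of_le ht'0 hsmem.1, lt_of_le_of_lt hsmem.2 htT⟩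
    -- FTC pointwise in p
    have hftc : ∀ p : ℝ × ℝ, ρ t p - ρ t' p = ∫ s in Ioc t' t, hdf (s, p) := by
      intro p
      have h1 : ∫ s in t'..t, hdf (s, p)
          = ρ t p - ρ t' p := by
        apply intervalIntegral.integral_eq_sub_of_hasDerivAt
        · intro s hsmem
          exact hder s (hsub s hsmem) p
        · apply ContinuousOn.intervalIntegrable
          have : ContinuousOn (fun s => hdf (s, p)) (uIcc t' t) := by
            apply hdfcont.comp (Continuous.continuousOn (by fun_prop))
            intro s hsmem
            exact ⟨hsub s hsmem, trivial⟩
          exact this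
      rw [← h1, intervalIntegral.integral_of_le ht't]
    -- continuity of hdf on the compact slab
    have hslab : ContinuousOn (fun z : (ℝ × ℝ) × ℝ => hdf (z.2, z.1))
        (Qdom ×ˢ Ioc t' t) := by
      apply hdfcont.comp (Continuous.continuousOn (by fun_prop))
      rintro ⟨p, s⟩ ⟨hp, hsmem⟩
      refine ⟨?_, trivial⟩
      exact ⟨lt_of_lt_of_le ht'0 hsmem.1.le, lt_of_le_of_lt hsmem.2 htT⟩
    have hint : IntegrableOn (fun z : (ℝ × ℝ) × ℝ => hdf (z.2, z.1))
        (Qdom ×ˢ Ioc t' t) := by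
      have hKc : IsCompact (QC ×ˢ Icc t' t) := isCompact_QC.prod isCompact_Icc
      have hcont2 : ContinuousOn (fun z : (ℝ × ℝ) × ℝ => hdf (z.2, z.1))
          (QC ×ˢ Icc t' t) := by
        apply hdfcont.comp (Continuous.continuousOn (by fun_prop))
        rintro ⟨p, s⟩ ⟨hp, hsmem⟩
        refine ⟨?_, trivial⟩
        exact ⟨lt_of_lt_of_le ht'0 hsmem.1, lt_of_le_of_lt hsmem.2 htT⟩
      exact (hcont2.integrableOn_compact hKc).mono_set
        (prod_mono Qdom_subset_QC Ioc_subset_Icc_self)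
    -- swap
    have hswap : ∫ p in Qdom, ∫ s in Ioc t' t, hdf (s, p)
        = ∫ s in Ioc t' t, ∫ p in Qdom, hdf (s, p) := by
      have := MeasureTheory.integral_integral_swap
        (f := fun (p : ℝ × ℝ) (s : ℝ) => hdf (s, p))
        (μ := volume.restrict Qdom) (ν := volume.restrict (Ioc t' t)) ?_
      · exact this
      · rw [Measure.prod_restrict]
        exact hint
    -- zero integrand via the PDE
    have hzero : ∀ s ∈ Ioc t' t, ∫ p in Qdom, hdf (s, p) = 0 := by
      intro s hsmem
      have hsIoo : s ∈ Ioo (0:ℝ) T :=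
        ⟨lt_of_lt_of_le ht'0 hsmem.1.le, lt_of_le_of_lt hsmem.2 htT⟩
      have hsI : s ∈ Ico 0 T ∩ Ioi 0 := by rw [Ico_inter_Ioi_eq hT]; exact hsIoo
      have hpde := hsol.pde s hsI
      have heq : ∀ p ∈ Qdom, hdf (s, p)
          = lap2 (ρ s) p + gbuoy * pd2 (ψ s) p * pd1 (ρ s) p
            - gbuoy * pd1 (ψ s) p * pd2 (ρ s) p
            - (pd1 (fun q => ρ s q * pd1 (cc s) q) p
              + pd2 (fun q => ρ s q * pd2 (cc s) q) p) := by
        intro p hp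
        have h1 := hpde p (Qdom_subset_Strip hp)
        have h2 : deriv (fun σ => ρ σ p) s = hdf (s, p) := (hder s hsIoo p).deriv
        rw [h2] at h1
        linarith
      rw [setIntegral_congr_fun measurable_Qdom heq]
      exact div_int_zero hsol hT hsIoo
    -- put together
    have hcongr : ∫ p in Qdom, (ρ t p - ρ t' p) = ∫ p in Qdom, ∫ s in Ioc t' t, hdf (s, p) :=
      setIntegral_congr_fun measurable_Qdom (fun p _ => hftc p)
    have hzero2 : ∫ s in Ioc t' t, ∫ p in Qdom, hdf (s, p) = 0 := by
      rw [setIntegral_congr_fun measurableSet_Ioc (fun s hsmem => hzero s hsmem)]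
      simp
    have hρtC : Continuous (ρ t) := (hsol.smooth_space t (by
      rw [Ico_inter_Ioi_eq hT]; exact ⟨ht0, htT⟩)).continuous
    have hρt'C : Continuous (ρ t') := (hsol.smooth_space t' (by
      rw [Ico_inter_Ioi_eq hT]; exact ⟨ht'0, lt_of_le_of_lt ht't htT⟩)).continuous
    have hsubint : ∫ p in Qdom, (ρ t p - ρ t' p)
        = (∫ p in Qdom, ρ t p) - ∫ p in Qdom, ρ t' p :=
      MeasureTheory.integral_sub (integrableOn_Qdom hρtC) (integrableOn_Qdom hρt'C)
    have : (∫ p in Qdom, ρ t p) - (∫ p in Qdom, ρ t' p) = 0 := by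
      rw [← hsubint, hcongr, hswap, hzero2]
    linarith
  -- continuity at 0
  intro t htI
  rcases eq_or_lt_of_le htI.1 with ht0 | ht0
  · rw [← ht0]
  · -- t > 0 : use continuity of the integral at 0 and constancy on (0, t]
    have htT := htI.2
    set Φ : ℝ → ℝ := fun τ => ∫ p in Qdom, ρ τ p with hΦ
    have hT2 : (0:ℝ) < T/2 := by linarith
    have hKc : IsCompact ((Icc (0:ℝ) (T/2)) ×ˢ QC) := isCompact_Icc.prod isCompact_QC
    have hKsub : ((Icc (0:ℝ) (T/2)) ×ˢ QC) ⊆ (Ico 0 T) ×ˢ Strip := by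
      rintro ⟨τ, p⟩ ⟨hτ, hp⟩
      exact ⟨⟨hτ.1, lt_of_le_of_lt hτ.2 (by linarith)⟩, QC_subset_Strip hp⟩
    obtain ⟨M, hM⟩ := hKc.exists_bound_of_continuousOn (hsol.cont.mono hKsub)
    have hΦc : ContinuousWithinAt Φ (Ico 0 T) 0 := by
      apply MeasureTheory.continuousWithinAt_of_dominated (bound := fun _ => M)
      · filter_upwards [self_mem_nhdsWithin] with τ hτ
        have hcontτ : ContinuousOn (ρ τ) Strip := by
          have := hsol.cont.comp (Continuous.continuousOn
            (by fun_prop : Continuous fun p : ℝ × ℝ => (τ, p)))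
            (fun p hp => ⟨hτ, hp⟩)
          exact this
        exact (hcontτ.mono Qdom_subset_Strip).aestronglyMeasurable measurable_Qdom
      · have hmemIcc : Icc (-(T/2)) (T/2) ∈ nhdsWithin (0:ℝ) (Ico 0 T) := by
          apply nhdsWithin_le_nhds
          exact Icc_mem_nhds (by linarith) hT2
        filter_upwards [hmemIcc, self_mem_nhdsWithin] with τ hτIcc hτI
        rw [ae_restrict_iff' measurable_Qdom]
        filter_upwards with p hp
        have : (τ, p) ∈ (Icc (0:ℝ) (T/2)) ×ˢ QC := ⟨⟨hτI.1, hτIcc.2⟩, Qdom_subset_QC hp⟩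
        exact hM (τ, p) this
      · exact integrableOn_const (ne_of_lt volume_Qdom_lt_top)
      · rw [ae_restrict_iff' measurable_Qdom]
        filter_upwards with p hp
        have hpS : p ∈ Strip := Qdom_subset_Strip hp
        have h0I : (0:ℝ) ∈ Ico (0:ℝ) T := ⟨le_refl _, by linarith⟩
        have hcurve : ContinuousWithinAt (fun τ : ℝ => (τ, p)) (Ico 0 T) 0 :=
          Continuous.continuousWithinAt (by fun_prop)
        have hcomp := ContinuousWithinAt.comp (f := fun τ : ℝ => (τ, p))
          (g := fun q : ℝ × (ℝ × ℝ) => ρ q.1 q.2) (hsol.cont (0, p) ⟨h0I, hpS⟩)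
          hcurve (fun τ hτ => ⟨hτ, hpS⟩)
        exact hcomp
    have hne : (nhdsWithin (0:ℝ) (Ioo 0 t)).NeBot := by
      apply mem_closure_iff_nhdsWithin_neBot.mp
      rw [closure_Ioo (ne_of_lt ht0)]
      exact ⟨le_refl 0, le_of_lt ht0⟩
    have h1 : Filter.Tendsto Φ (nhdsWithin (0:ℝ) (Ioo 0 t)) (nhds (Φ 0)) :=
      hΦc.tendsto.mono_left (nhdsWithin_mono 0
        (fun x hx => ⟨le_of_lt hx.1, lt_trans hx.2 htT⟩))
    have h2 : Filter.Tendsto Φ (nhdsWithin (0:ℝ) (Ioo 0 t)) (nhds (Φ t)) := by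
      apply Filter.Tendsto.congr' _ (tendsto_const_nhds (α := ℝ) (x := Φ t))
      filter_upwards [self_mem_nhdsWithin] with τ hτ
      exact step τ t hτ.1 (le_of_lt hτ.2) htT
    exact (tendsto_nhds_unique h1 h2).symm

  
end mass

end KS
namespace KS

open MeasureTheory Real Set intervalIntegral Filter

lemma two_pow_ge_real (n : ℕ) : ((n:ℝ)) + 1 ≤ (2:ℝ)^n := by
  have h := Nat.lt_two_pow_self (n := n)
  have : ((n:ℕ):ℝ) + 1 ≤ ((2^n : ℕ):ℝ) := by
    exact_mod_cast h
  simpa using this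

lemma rpow_23_six {x : ℝ} (hx : 0 ≤ x) : (x ^ ((2:ℝ)/3))^(6:ℕ) = x^(4:ℕ) := by
  rw [← Real.rpow_natCast (x ^ ((2:ℝ)/3)) 6, ← Real.rpow_mul hx, ← Real.rpow_natCast x 4]
  congr 1
  push_cast
  ring

lemma rpow_2N3_six (N : ℕ) : ((2:ℝ) ^ (2 * (N:ℝ)/3))^(6:ℕ) = (2:ℝ)^(4*N : ℕ) := by
  rw [← Real.rpow_natCast ((2:ℝ) ^ (2 * (N:ℝ)/3)) 6,
    ← Real.rpow_mul (by norm_num : (0:ℝ) ≤ 2), ← Real.rpow_natCast 2 (4*N)]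
  congr 1
  push_cast
  ring

end KS


set_option maxHeartbeats 2000000 in
/-- Bound on the Keller–Segel nonlinearity contribution: if
`2^{N-1} ≤ ‖ρ(·,t) - ρ_M‖²_{L²} ≤ 2^{N+2}` on `(s,r)`, then
`|∫_s^r ∫_Ω ρ ∂_{x₂}(−Δ_N)⁻¹(ρ - ρ_M) dx dt| ≤ C ρ_M^{2/3} 2^{2N/3}(r-s)`. -/
theorem keller_segel_nonlinearity_bound :
    ∃ N₀ : ℝ → ℕ, ∃ C : ℝ, 0 < C ∧
      ∀ (g T : ℝ) (ρ cc ψ : ℝ → ℝ × ℝ → ℝ),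
        IsRegSol g (Ico 0 T) ρ cc ψ → NonnegSol (Ico 0 T) ρ →
        ∀ N : ℕ, N₀ (meanQ (ρ 0)) ≤ N →
        ∀ s r : ℝ, 0 ≤ s → s < r → r < T →
          (∀ t ∈ Ioo s r,
            (2 : ℝ) ^ N / 2 ≤ nL2sq (devF ρ t) ∧ nL2sq (devF ρ t) ≤ 2 ^ (N + 2)) →
          |∫ t in s..r, ∫ p in Qdom, ρ t p * pd2 (cc t) p| ≤
            C * (meanQ (ρ 0)) ^ ((2 : ℝ) / 3) * (2 : ℝ) ^ (2 * (N : ℝ) / 3) * (r - s) := by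
  open KS in
  refine ⟨fun x => ⌈x^2⌉₊ + 1, 3000, by norm_num, ?_⟩
  intro g T ρ cc ψ hsol hnn N hN s r hs0 hsr hrT hbnd
  have hT : (0:ℝ) < T := lt_of_le_of_lt (le_trans hs0 (le_of_lt hsr)) hrT
  set m := meanQ (ρ 0) with hm
  -- mass conservation
  have hmass : ∀ t ∈ Ico (0:ℝ) T, meanQ (ρ t) = m := by
    intro t ht
    rw [hm]
    unfold meanQ
    rw [KS.mass_conserved hsol hT t ht]
  have h0I : (0:ℝ) ∈ Ico (0:ℝ) T := ⟨le_refl _, hT⟩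
  have hm0 : 0 ≤ m := by
    rw [hm]
    unfold meanQ
    apply mul_nonneg (by positivity)
    apply setIntegral_nonneg KS.measurable_Qdom
    intro p hp
    exact hnn 0 h0I p (KS.Qdom_subset_Strip hp)
  set B : ℝ := 3000 * m ^ ((2:ℝ)/3) * (2:ℝ) ^ (2 * (N:ℝ)/3) with hB
  have hB0 : 0 ≤ B := by
    rw [hB]
    apply mul_nonneg (mul_nonneg (by norm_num) (Real.rpow_nonneg hm0 _))
    exact Real.rpow_nonneg (by norm_num) _
  -- the midpoint is in the time interval
  have hmid : (s+r)/2 ∈ Ioo s r := ⟨by linarith, by linarith⟩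
  have hmemIoo : ∀ t ∈ Ioo s r, t ∈ Ico (0:ℝ) T ∩ Ioi 0 ∧ t ∈ Ico (0:ℝ) T := by
    intro t ht
    have h1 : 0 ≤ t := le_trans hs0 (le_of_lt ht.1)
    have h2 : t < T := lt_trans ht.2 hrT
    constructor
    · exact ⟨⟨h1, h2⟩, lt_of_le_of_lt hs0 ht.1⟩
    · exact ⟨h1, h2⟩
  -- degenerate case m = 0 is impossible
  rcases eq_or_lt_of_le hm0 with hmz | hmpos
  · exfalso
    set t₀ := (s+r)/2 with ht₀
    obtain ⟨ht₀I, ht₀Ico⟩ := hmemIoo t₀ hmid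
    have hρC : Continuous (ρ t₀) := (hsol.smooth_space t₀ ht₀I).continuous
    have hint0 : ∫ p in Qdom, ρ t₀ p = 0 := by
      have h1 := hmass t₀ ht₀Ico
      rw [← hmz] at h1
      unfold meanQ at h1
      have hne : (1 / (2 * π ^ 2)) ≠ 0 := by positivity
      rcases mul_eq_zero.mp h1 with h | h
      · exact absurd h hne
      · exact h
    have hae : (fun p => ρ t₀ p) =ᶠ[ae (volume.restrict Qdom)] 0 := by
      apply (MeasureTheory.integral_eq_zero_iff_of_nonneg_ae _ _).mp hint0
      · rw [Filter.EventuallyLE, ae_restrict_iff' KS.measurable_Qdom]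
        filter_upwards with p hp
        exact hnn t₀ ht₀Ico p (KS.Qdom_subset_Strip hp)
      · exact KS.integrableOn_Qdom hρC
    have hD0 : nL2sq (devF ρ t₀) = 0 := by
      unfold nL2sq devF
      rw [hmass t₀ ht₀Ico, ← hmz]
      have : (fun p => (ρ t₀ p - 0)^2) =ᶠ[ae (volume.restrict Qdom)] 0 := by
        filter_upwards [hae] with p hp
        simp only [Pi.zero_apply] at hp ⊢
        rw [hp]
        ring
      rw [MeasureTheory.integral_congr_ae this]
      simp
    have hlow := (hbnd t₀ hmid).1
    rw [hD0] at hlow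
    have : (0:ℝ) < (2:ℝ)^N / 2 := by positivity
    linarith
  -- main case m > 0
  have hptw : ∀ t ∈ Ioo s r, |∫ p in Qdom, ρ t p * pd2 (cc t) p| ≤ B := by
    intro t ht
    obtain ⟨htI, htIco⟩ := hmemIoo t ht
    have hmt : meanQ (ρ t) = m := hmass t htIco
    have hρC : ContDiff ℝ (⊤:ℕ∞) (ρ t) := hsol.smooth_space t htI
    have hfpos : ∀ p ∈ Strip, 0 ≤ ρ t p := hnn t htIco
    have hchem := hsol.chem t htI
    rw [hmt] at hchem
    have hDval : nL2sq (devF ρ t) = ∫ p in Qdom, (ρ t p - m)^2 := by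
      unfold nL2sq devF
      rw [hmt]
    have hDlow : (2:ℝ)^N / 2 ≤ ∫ p in Qdom, (ρ t p - m)^2 := by
      rw [← hDval]; exact (hbnd t ht).1
    have hDhigh : (∫ p in Qdom, (ρ t p - m)^2) ≤ (2:ℝ)^(N+2) := by
      rw [← hDval]
      exact_mod_cast (hbnd t ht).2
    have hD0 : 0 ≤ ∫ p in Qdom, (ρ t p - m)^2 :=
      setIntegral_nonneg KS.measurable_Qdom (fun p _ => sq_nonneg _)
    -- m² ≤ D
    have hDm : m^2 ≤ ∫ p in Qdom, (ρ t p - m)^2 := by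
      have h1 : m^2 ≤ (⌈m^2⌉₊ : ℝ) := Nat.le_ceil _
      have h2 : ((⌈m^2⌉₊ : ℕ):ℝ) + 1 ≤ (2:ℝ)^(⌈m^2⌉₊) := KS.two_pow_ge_real _
      have h3 : (2:ℝ)^(⌈m^2⌉₊) ≤ (2:ℝ)^N / 2 := by
        have hNge : ⌈m^2⌉₊ + 1 ≤ N := hN
        have : (2:ℝ)^(⌈m^2⌉₊ + 1) ≤ (2:ℝ)^N :=
          pow_le_pow_right₀ (by norm_num) hNge
        rw [pow_succ] at this
        linarith
      linarith
    have hkey := KS.main_pointwise hρC.continuous hfpos hmt hm0 hchem hDm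
    -- convert to the desired bound via sixth powers
    set F := ∫ p in Qdom, ρ t p * pd2 (cc t) p with hF
    have hrpow1 : (m ^ ((2:ℝ)/3))^(6:ℕ) = m^(4:ℕ) := KS.rpow_23_six hm0
    have hrpow2 : ((2:ℝ) ^ (2 * (N:ℝ)/3))^(6:ℕ) = (2:ℝ)^(4*N : ℕ) := KS.rpow_2N3_six N
    have hpow6 : |F|^(6:ℕ) ≤ B^(6:ℕ) := by
      have e1 : |F|^(6:ℕ) = F^6 := by
        rw [← abs_pow]
        exact abs_of_nonneg (by positivity)
      have e2 : B^(6:ℕ) = 3000^6 * m^4 * (2:ℝ)^(4*N : ℕ) := by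
        rw [hB, mul_pow, mul_pow, hrpow1, hrpow2]
      have e3 : ((∫ p in Qdom, (ρ t p - m)^2))^4 ≤ ((2:ℝ)^(N+2))^4 :=
        pow_le_pow_left₀ hD0 hDhigh 4
      have e4 : ((2:ℝ)^(N+2))^4 = 256 * (2:ℝ)^(4*N : ℕ) := by
        rw [← pow_mul]
        rw [show (N+2)*4 = 4*N + 8 by ring, pow_add]
        ring
      have e5 : (10:ℝ)^17 * m^4 * ((∫ p in Qdom, (ρ t p - m)^2))^4
          ≤ (10:ℝ)^17 * m^4 * (256 * (2:ℝ)^(4*N : ℕ)) := by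
        apply mul_le_mul_of_nonneg_left _ (by positivity)
        rw [← e4]
        exact e3
      have e6 : (10:ℝ)^17 * m^4 * (256 * (2:ℝ)^(4*N : ℕ)) ≤ 3000^6 * m^4 * (2:ℝ)^(4*N:ℕ) := by
        have : (10:ℝ)^17 * 256 ≤ 3000^6 := by norm_num
        nlinarith [pow_nonneg hm0 4, pow_nonneg (by norm_num : (0:ℝ) ≤ 2) (4*N),
          mul_nonneg (pow_nonneg hm0 4) (pow_nonneg (by norm_num : (0:ℝ) ≤ 2) (4*N))]
      rw [e1, e2]
      calc F^6 ≤ 10^17 * m^4 * ((∫ p in Qdom, (ρ t p - m)^2))^4 := hkey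
        _ ≤ (10:ℝ)^17 * m^4 * (256 * (2:ℝ)^(4*N : ℕ)) := e5
        _ ≤ 3000^6 * m^4 * (2:ℝ)^(4*N:ℕ) := e6
    exact le_of_pow_le_pow_left₀ (by norm_num) hB0 hpow6
  -- time integral
  set Ft : ℝ → ℝ := fun t => ∫ p in Qdom, ρ t p * pd2 (cc t) p with hFt
  show |∫ t in s..r, Ft t| ≤ B * (r - s)
  by_cases hInt : IntervalIntegrable Ft volume s r
  · -- primitive is continuous; bound on [s, r) passes to the limit
    have hIccInt : IntegrableOn Ft (uIcc s r) volume := by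
      rw [uIcc_of_le (le_of_lt hsr)]
      have h1 : IntegrableOn Ft (Ioc s r) volume := hInt.1
      exact h1.congr_set_ae (MeasureTheory.Ioc_ae_eq_Icc).symm
    have hΨcont : ContinuousOn (fun u => ∫ τ in s..u, Ft τ) (Icc s r) := by
      have := intervalIntegral.continuousOn_primitive_interval hIccInt
      rwa [uIcc_of_le (le_of_lt hsr)] at this
    have hb : ∀ u ∈ Ico s r, |∫ τ in s..u, Ft τ| ≤ B * (r - s) := by
      intro u hu
      have hu1 := hu.1
      have hu2 := hu.2
      rcases eq_or_lt_of_le hu.1 with heq | hlt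
      · rw [← heq]
        simp only [intervalIntegral.integral_same, abs_zero]
        apply mul_nonneg hB0 (by linarith)
      · have hbd : ∀ x ∈ Set.uIoc s u, ‖Ft x‖ ≤ B := by
          intro x hx
          rw [Set.uIoc_of_le (le_of_lt hlt)] at hx
          have hxIoo : x ∈ Ioo s r := ⟨hx.1, lt_of_le_of_lt hx.2 hu.2⟩
          exact hptw x hxIoo
        have := intervalIntegral.norm_integral_le_of_norm_le_const hbd
        have habs : |u - s| = u - s := abs_of_nonneg (by linarith)
        rw [habs] at this
        calc |∫ τ in s..u, Ft τ| ≤ B * (u - s) := this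
          _ ≤ B * (r - s) := mul_le_mul_of_nonneg_left (by linarith) hB0
    have hne : (nhdsWithin r (Ico s r)).NeBot := by
      apply mem_closure_iff_nhdsWithin_neBot.mp
      rw [closure_Ico (ne_of_lt hsr)]
      exact ⟨le_of_lt hsr, le_refl _⟩
    have h1 : Tendsto (fun u => ∫ τ in s..u, Ft τ) (nhdsWithin r (Ico s r))
        (nhds (∫ τ in s..r, Ft τ)) := by
      have := (hΨcont r ⟨le_of_lt hsr, le_refl _⟩).mono Ico_subset_Icc_self
      exact this.tendsto
    have h2 : Tendsto (fun u => |∫ τ in s..u, Ft τ|) (nhdsWithin r (Ico s r))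
        (nhds |∫ τ in s..r, Ft τ|) := (continuous_abs.tendsto _).comp h1
    apply le_of_tendsto h2
    filter_upwards [self_mem_nhdsWithin] with u hu
    exact hb u hu
  · rw [intervalIntegral.integral_undef hInt]
    simp only [abs_zero]
    apply mul_nonneg hB0 (by linarith)
end
end
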